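/- arXiv:2406.04020 — 9 statements merged into one kernel-verified Lean document; each statement's English description precedes it below -/
import Mathlib

section
/- For every graph G, the edge open packing number of G is at most the independence number of G: ρ_e^o(G) ≤ α(G). -/
open SimpleGraph

/-- An edge open packing (EOP) set: a set `B` of edges of `G` such that no edge of `G`
(other than the two edges themselves) joins an endvertex of one edge of `B` to an
endvertex of another edge of `B`. -/
def IsEOPSet {V : Type*} (G : SimpleGraph V) (B : Set (Sym2 V)) : Prop :=
  B ⊆ G.edgeSet ∧ ∀ e₁ ∈ B, ∀ e₂ ∈ B, e₁ ≠ e₂ →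
    ∀ x ∈ e₁, ∀ y ∈ e₂, G.Adj x y → s(x, y) = e₁ ∨ s(x, y) = e₂

/-- An induced matching: a set `M` of edges of `G` such that no edge of `G` joins an
endvertex of one edge of `M` to an endvertex of another edge of `M` (this in particular
forces `M` to be a matching). -/
def IsInducedMatching {V : Type*} (G : SimpleGraph V) (M : Set (Sym2 V)) : Prop :=
  M ⊆ G.edgeSet ∧ ∀ e₁ ∈ M, ∀ e₂ ∈ M, e₁ ≠ e₂ →
    ∀ x ∈ e₁, ∀ y ∈ e₂, ¬ G.Adj x y

/-- The edge open packing number `ρₑᵒ(G)`. -/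
noncomputable def eopNum {V : Type*} (G : SimpleGraph V) : ℕ :=
  sSup {n | ∃ B : Finset (Sym2 V), IsEOPSet G ↑B ∧ B.card = n}

/-- The induced matching number `ν_I(G)`. -/
noncomputable def inducedMatchingNum {V : Type*} (G : SimpleGraph V) : ℕ :=
  sSup {n | ∃ M : Finset (Sym2 V), IsInducedMatching G ↑M ∧ M.card = n}

/-- The independence number `α(G)`. -/
noncomputable def indepNum {V : Type*} (G : SimpleGraph V) : ℕ :=
  sSup {n | ∃ S : Finset V, (∀ x ∈ S, ∀ y ∈ S, ¬ G.Adj x y) ∧ S.card = n}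

/-- The open packing number `ρᵒ(G)`: maximum size of a set of vertices whose open
neighborhoods are pairwise disjoint. -/
noncomputable def openPackNum {V : Type*} (G : SimpleGraph V) : ℕ :=
  sSup {n | ∃ P : Finset V,
    (∀ x ∈ P, ∀ y ∈ P, x ≠ y → ∀ z, ¬ (G.Adj x z ∧ G.Adj y z)) ∧ P.card = n}

/-- The 2-packing number `ρ₂(G)`: maximum size of a set of vertices pairwise at
distance greater than 2. -/
noncomputable def twoPackNum {V : Type*} (G : SimpleGraph V) : ℕ :=
  sSup {n | ∃ P : Finset V,
    (∀ x ∈ P, ∀ y ∈ P, x ≠ y →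
      ¬ G.Adj x y ∧ (∀ z, ¬ (G.Adj x z ∧ G.Adj z y))) ∧ P.card = n}

/-- The 3-packing number `ρ₃(G)`: maximum size of a set of vertices pairwise at
distance greater than 3. -/
noncomputable def threePackNum {V : Type*} (G : SimpleGraph V) : ℕ :=
  sSup {n | ∃ P : Finset V,
    (∀ x ∈ P, ∀ y ∈ P, x ≠ y →
      ¬ G.Adj x y ∧ (∀ z, ¬ (G.Adj x z ∧ G.Adj z y)) ∧
      (∀ z w, ¬ (G.Adj x z ∧ G.Adj z w ∧ G.Adj w y))) ∧ P.card = n}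

/-- Minimum degree of `G` (degrees measured via `Set.ncard` of neighborhoods). -/
noncomputable def minDeg {V : Type*} (G : SimpleGraph V) : ℕ :=
  sInf {d | ∃ v, d = (G.neighborSet v).ncard}

/-- The lexicographic product `G ∘ H`. -/
def lexProd {V W : Type*} (G : SimpleGraph V) (H : SimpleGraph W) :
    SimpleGraph (V × W) where
  Adj x y := G.Adj x.1 y.1 ∨ (x.1 = y.1 ∧ H.Adj x.2 y.2)
  symm := by
    constructor
    rintro ⟨g, h⟩ ⟨g', h'⟩ (hgg | ⟨rfl, hh⟩)
    · exact Or.inl hgg.symm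
    · exact Or.inr ⟨rfl, hh.symm⟩
  loopless := by
    constructor
    rintro ⟨g, h⟩ (hgg | ⟨-, hh⟩)
    · exact G.loopless.irrefl g hgg
    · exact H.loopless.irrefl h hh

/-- The direct (tensor) product `G × H`. -/
def tensorProd {V W : Type*} (G : SimpleGraph V) (H : SimpleGraph W) :
    SimpleGraph (V × W) where
  Adj x y := G.Adj x.1 y.1 ∧ H.Adj x.2 y.2
  symm := by constructor; rintro ⟨g, h⟩ ⟨g', h'⟩ ⟨h1, h2⟩; exact ⟨h1.symm, h2.symm⟩
  loopless := by constructor; rintro ⟨g, h⟩ ⟨h1, -⟩; exact G.loopless.irrefl g h1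

/-- The strong product `G ⊠ H`. -/
def strongProd {V W : Type*} (G : SimpleGraph V) (H : SimpleGraph W) :
    SimpleGraph (V × W) where
  Adj x y := x ≠ y ∧ (x.1 = y.1 ∨ G.Adj x.1 y.1) ∧ (x.2 = y.2 ∨ H.Adj x.2 y.2)
  symm := by
    constructor
    rintro x y ⟨hne, h1, h2⟩
    exact ⟨hne.symm, h1.imp Eq.symm (fun h => h.symm), h2.imp Eq.symm (fun h => h.symm)⟩
  loopless := by constructor; rintro x ⟨hne, -, -⟩; exact hne rfl

/-- The star `K_{1,r}` with center `none` and leaves `some i`. -/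
def starGraph (r : ℕ) : SimpleGraph (Option (Fin r)) :=
  SimpleGraph.fromRel (fun x _ => x = none)

/-- The spider `S^k`: obtained from `K_{1,k}` by subdividing every edge exactly once.
The center is `none`, `some (i, false)` are the support vertices and `some (i, true)`
the leaves. -/
def spiderGraph (k : ℕ) : SimpleGraph (Option (Fin k × Bool)) :=
  SimpleGraph.fromRel (fun x y =>
    (x = none ∧ ∃ i, y = some (i, false)) ∨
    (∃ i, x = some (i, false) ∧ y = some (i, true)))

/-- The `n`-dimensional hypercube `Q_n`: vertices are `Fin n → Bool`, adjacent iff they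
differ in exactly one coordinate. -/
def hypercube (n : ℕ) : SimpleGraph (Fin n → Bool) :=
  SimpleGraph.fromRel (fun x y =>
    (Finset.univ.filter (fun i => x i ≠ y i)).card = 1)

/-- The corona product `G ⊙ H`: vertices `(v, none)` form a copy of `G`, vertices
`(v, some h)` form a copy of `H` for each `v`, and `(v, none)` is joined to every
vertex of its copy of `H`. -/
def corona {V W : Type*} (G : SimpleGraph V) (H : SimpleGraph W) :
    SimpleGraph (V × Option W) :=
  SimpleGraph.fromRel (fun x y =>
    (x.2 = none ∧ y.2 = none ∧ G.Adj x.1 y.1) ∨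
    (x.1 = y.1 ∧ ∃ h h', x.2 = some h ∧ y.2 = some h' ∧ H.Adj h h') ∨
    (x.1 = y.1 ∧ x.2 = none ∧ ∃ h, y.2 = some h))

/-- The set of endvertices of the edges of `B`. -/
def supportSet {V : Type*} (B : Set (Sym2 V)) : Set V := {v | ∃ e ∈ B, v ∈ e}

/-- For every graph `G`, `ρₑᵒ(G) ≤ α(G)`. -/
theorem stmt_3 {V : Type*} [Fintype V] (G : SimpleGraph V) :
    eopNum G ≤ _root_.indepNum G := by
  classical
  have hne : {n | ∃ B : Finset (Sym2 V), IsEOPSet G ↑B ∧ B.card = n}.Nonempty := by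
    refine ⟨0, ∅, ⟨?_, ?_⟩, Finset.card_empty⟩
    · simp
    · simp
  refine csSup_le hne ?_
  rintro n ⟨B, hB, rfl⟩
  -- key: each edge has an endpoint not in any other edge of B
  have key : ∀ e ∈ B, ∃ v, v ∈ e ∧ ∀ e' ∈ B, e' ≠ e → v ∉ e' := by
    intro e he
    induction e using Sym2.ind with
    | _ a b =>
      have hab : G.Adj a b := (G.mem_edgeSet).1 (hB.1 he)
      by_cases ha : ∀ e' ∈ B, e' ≠ s(a, b) → a ∉ e'
      · exact ⟨a, by simp, ha⟩
      · push_neg at ha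
        obtain ⟨e₁, he₁, hne₁, hae₁⟩ := ha
        refine ⟨b, by simp [Sym2.mem_iff], ?_⟩
        intro e₂ he₂ hne₂ hbe₂
        by_cases h12 : e₁ = e₂
        · subst h12
          exact hne₁ (((Sym2.mem_and_mem_iff hab.ne).1 ⟨hae₁, hbe₂⟩))
        · rcases hB.2 e₁ he₁ e₂ he₂ h12 a hae₁ b hbe₂ hab with h | h
          · exact hne₁ h.symm
          · exact hne₂ h.symm
  set f : Sym2 V → V := fun e =>
    if h : ∃ v, v ∈ e ∧ ∀ e' ∈ B, e' ≠ e → v ∉ e' then h.choose else (Quot.out e).1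
    with hf
  have hf₁ : ∀ e ∈ B, f e ∈ e := by
    intro e he
    have h := key e he
    simp only [hf, dif_pos h]
    exact h.choose_spec.1
  have hf₂ : ∀ e ∈ B, ∀ e' ∈ B, e' ≠ e → f e ∉ e' := by
    intro e he
    have h := key e he
    simp only [hf, dif_pos h]
    exact h.choose_spec.2
  have hinj : Set.InjOn f ↑B := by
    intro e he e' he' hEq
    by_contra hne'
    exact hf₂ e he e' he' (Ne.symm hne') (hEq ▸ hf₁ e' he')
  have hindep : ∀ x ∈ B.image f, ∀ y ∈ B.image f, ¬ G.Adj x y := by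
    intro x hx y hy hadj
    obtain ⟨e₁, he₁, rfl⟩ := Finset.mem_image.1 hx
    obtain ⟨e₂, he₂, rfl⟩ := Finset.mem_image.1 hy
    by_cases h12 : e₁ = e₂
    · subst h12; exact G.loopless.irrefl _ (by exact hadj) |>.elim
    · rcases hB.2 e₁ he₁ e₂ he₂ h12 (f e₁) (hf₁ e₁ he₁) (f e₂) (hf₁ e₂ he₂) hadj with h | h
      · exact hf₂ e₂ he₂ e₁ he₁ h12 (h ▸ Sym2.mem_mk_right _ _)
      · exact hf₂ e₁ he₁ e₂ he₂ (Ne.symm h12) (h ▸ Sym2.mem_mk_left _ _)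
  have hcard : (B.image f).card = B.card := Finset.card_image_of_injOn hinj
  have hmem : B.card ∈ {n | ∃ S : Finset V, (∀ x ∈ S, ∀ y ∈ S, ¬ G.Adj x y) ∧ S.card = n} :=
    ⟨B.image f, hindep, hcard⟩
  refine le_csSup ⟨Fintype.card V, ?_⟩ hmem
  rintro m ⟨S, -, rfl⟩
  exact S.card_le_univ
end

section
/- If B is an edge open packing set of a graph G, then the subgraph of G induced by the endvertices of the edges of B is a disjoint union of stars (every connected component is a star K_{1,r} for some r ≥ 1). -/
open SimpleGraph

/-- If `B` is an EOP set of `G`, then the subgraph of `G` induced by the endvertices of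
the edges of `B` is a disjoint union of stars: every connected component has a center `c`
which is adjacent to all other vertices of the component, every edge of the component is
incident with `c`, and the component contains at least one edge (i.e. it is `K_{1,r}`
with `r ≥ 1`). -/
theorem stmt_4 {V : Type*} (G : SimpleGraph V) (B : Set (Sym2 V)) (hB : IsEOPSet G B) :
    ∀ v : supportSet B, ∃ c : supportSet B,
      (G.induce (supportSet B)).Reachable v c ∧
      (∃ w, (G.induce (supportSet B)).Adj c w) ∧
      (∀ w, (G.induce (supportSet B)).Reachable v w → w ≠ c →
        (G.induce (supportSet B)).Adj c w) ∧
      (∀ x y, (G.induce (supportSet B)).Reachable v x →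
        (G.induce (supportSet B)).Adj x y → x = c ∨ y = c) := by
  obtain ⟨hBsub, hEOP⟩ := hB
  -- every edge of the induced subgraph comes from `B`
  have hedge : ∀ x y : supportSet B, (G.induce (supportSet B)).Adj x y →
      s(x.1, y.1) ∈ B := by
    intro x y hxy
    have hadj : G.Adj x.1 y.1 := hxy
    obtain ⟨e₁, he₁B, hxe₁⟩ := x.2
    obtain ⟨e₂, he₂B, hye₂⟩ := y.2
    by_cases h : e₁ = e₂
    · subst h
      have : s(x.1, y.1) = e₁ := ((Sym2.mem_and_mem_iff hadj.ne).mp ⟨hxe₁, hye₂⟩).symm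
      rwa [this]
    · rcases hEOP e₁ he₁B e₂ he₂B h x.1 hxe₁ y.1 hye₂ hadj with h' | h'
      · rw [h']; exact he₁B
      · rw [h']; exact he₂B
  -- if a vertex lies in two distinct edges of `B`, it is a "center"
  have keyL : ∀ (a : V) (e₁ e₂ : Sym2 V), e₁ ∈ B → e₂ ∈ B → e₁ ≠ e₂ → a ∈ e₁ → a ∈ e₂ →
      ∀ e ∈ B, ∀ x ∈ e, (x = a ∨ G.Adj a x) → a ∈ e := by
    intro a e₁ e₂ h1 h2 hne ha1 ha2 e heB x hxe hx
    rcases hx with rfl | hadj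
    · exact hxe
    by_contra hnae
    have hne1 : e₁ ≠ e := fun h => hnae (h ▸ ha1)
    have hne2 : e₂ ≠ e := fun h => hnae (h ▸ ha2)
    have k1 := hEOP e₁ h1 e heB hne1 a ha1 x hxe hadj
    have k2 := hEOP e₂ h2 e heB hne2 a ha2 x hxe hadj
    rcases k1 with k1 | k1
    · rcases k2 with k2 | k2
      · exact hne (k1.symm.trans k2)
      · exact hnae (k2 ▸ Sym2.mem_mk_left a x)
    · exact hnae (k1 ▸ Sym2.mem_mk_left a x)
  intro v
  obtain ⟨e, heB, hve⟩ := v.2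
  obtain ⟨b, hb⟩ := (Sym2.mem_iff_exists).mp hve
  have hadjvb : G.Adj v.1 b := by
    have := hBsub heB
    rw [hb, SimpleGraph.mem_edgeSet] at this
    exact this
  have hbsupp : b ∈ supportSet B := ⟨e, heB, by rw [hb]; exact Sym2.mem_mk_right _ _⟩
  -- the main derivation from a center `c`
  have main : ∀ c : supportSet B, (v = c ∨ (G.induce (supportSet B)).Adj c v) →
      c.1 ∈ e →
      (∀ e' ∈ B, ∀ x ∈ e', (x = c.1 ∨ G.Adj c.1 x) → c.1 ∈ e') →
      ∃ c : supportSet B,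
      (G.induce (supportSet B)).Reachable v c ∧
      (∃ w, (G.induce (supportSet B)).Adj c w) ∧
      (∀ w, (G.induce (supportSet B)).Reachable v w → w ≠ c →
        (G.induce (supportSet B)).Adj c w) ∧
      (∀ x y, (G.induce (supportSet B)).Reachable v x →
        (G.induce (supportSet B)).Adj x y → x = c ∨ y = c) := by
    intro c hvc hce hstar
    set S : Set (supportSet B) := {u | u = c ∨ G.Adj c.1 u.1} with hS
    have hclosed : ∀ u ∈ S, ∀ w, (G.induce (supportSet B)).Adj u w → w ∈ S := by
      intro u hu w huw
      have hBe : s(u.1, w.1) ∈ B := hedge u w huw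
      have hu' : (u.1 : V) = c.1 ∨ G.Adj c.1 u.1 := by
        rcases hu with h | h
        · exact Or.inl (by rw [h])
        · exact Or.inr h
      have hcmem : c.1 ∈ s(u.1, w.1) :=
        hstar _ hBe u.1 (Sym2.mem_mk_left _ _) hu'
      rcases Sym2.mem_iff.mp hcmem with h | h
      · -- c = u, so w is adjacent to c
        right
        have : G.Adj u.1 w.1 := huw
        rwa [h]
      · left; exact Subtype.ext h.symm
    have hvS : v ∈ S := by
      rcases hvc with h | h
      · exact Or.inl h
      · exact Or.inr h
    have hwalk : ∀ (u w : supportSet B), (G.induce (supportSet B)).Walk u w →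
        u ∈ S → w ∈ S := by
      intro u w p
      induction p with
      | nil => exact id
      | cons h p ih => exact fun hu => ih (hclosed _ hu _ h)
    have hreach : ∀ w, (G.induce (supportSet B)).Reachable v w → w ∈ S := by
      intro w hr
      exact hr.elim fun p => hwalk _ _ p hvS
    refine ⟨c, ?_, ?_, ?_, ?_⟩
    · rcases hvc with h | h
      · rw [h]
      · exact h.symm.reachable
    · obtain ⟨d, hd⟩ := (Sym2.mem_iff_exists).mp hce
      have hadjcd : G.Adj c.1 d := by
        have := hBsub heB
        rw [hd, SimpleGraph.mem_edgeSet] at this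
        exact this
      have hdsupp : d ∈ supportSet B := ⟨e, heB, by rw [hd]; exact Sym2.mem_mk_right _ _⟩
      exact ⟨⟨d, hdsupp⟩, hadjcd⟩
    · intro w hw hwc
      rcases hreach w hw with h | h
      · exact absurd h hwc
      · exact h
    · intro x y hx hxy
      have hxS := hreach x hx
      have hBe : s(x.1, y.1) ∈ B := hedge x y hxy
      have hx' : (x.1 : V) = c.1 ∨ G.Adj c.1 x.1 := by
        rcases hxS with h | h
        · exact Or.inl (by rw [h])
        · exact Or.inr h
      have hcmem : c.1 ∈ s(x.1, y.1) :=
        hstar _ hBe x.1 (Sym2.mem_mk_left _ _) hx'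
      rcases Sym2.mem_iff.mp hcmem with h | h
      · exact Or.inl (Subtype.ext h.symm)
      · exact Or.inr (Subtype.ext h.symm)
  by_cases hA : ∃ e' ∈ B, v.1 ∈ e' ∧ e' ≠ e
  · obtain ⟨e', he'B, hve', hne⟩ := hA
    exact main v (Or.inl rfl) hve
      (keyL v.1 e e' heB he'B hne.symm hve hve')
  · push_neg at hA
    have huniqv : ∀ e' ∈ B, v.1 ∈ e' → e' = e := fun e' h1 h2 => hA e' h1 h2
    have hbe : b ∈ e := by rw [hb]; exact Sym2.mem_mk_right _ _
    have hvc : v = (⟨b, hbsupp⟩ : supportSet B) ∨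
        (G.induce (supportSet B)).Adj ⟨b, hbsupp⟩ v := Or.inr hadjvb.symm
    by_cases hBb : ∃ e' ∈ B, b ∈ e' ∧ e' ≠ e
    · obtain ⟨e', he'B, hbe', hne⟩ := hBb
      exact main ⟨b, hbsupp⟩ hvc hbe
        (keyL b e e' heB he'B hne.symm hbe hbe')
    · push_neg at hBb
      refine main ⟨b, hbsupp⟩ hvc hbe ?_
      intro e' he'B x hxe' hx
      rcases hx with rfl | hadj
      · exact hxe'
      by_cases he'e : e' = e
      · rw [he'e]; exact hbe
      rcases hEOP e heB e' he'B (fun h => he'e h.symm) b hbe x hxe' hadj with h | h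
      · -- s(b,x) = e, so x = v.1, contradicting uniqueness at v
        exfalso
        have hxe : x ∈ e := h ▸ Sym2.mem_mk_right b x
        rw [hb, Sym2.mem_iff] at hxe
        rcases hxe with rfl | rfl
        · exact he'e (huniqv e' he'B hxe')
        · exact hadj.ne rfl
      · exact h ▸ Sym2.mem_mk_left b x
end

section
/- For any graph G without isolated vertices, ρ_e^o(K_2 ∘ G) = α(G), where K_2 ∘ G denotes the lexicographic product. -/
open SimpleGraph

open Classical in
/-- A choice of a "leaf" endvertex of an edge. -/
noncomputable def eopPick {V : Type*} (B : Finset (Sym2 V)) (e : Sym2 V) : V :=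
  if h : ∃ a, a ∈ e ∧ ∃ e' ∈ B, e' ≠ e ∧ a ∈ e' then Sym2.Mem.other h.choose_spec.1
  else e.out.1

lemma eopPick_mem {V : Type*} (B : Finset (Sym2 V)) (e : Sym2 V) : eopPick B e ∈ e := by
  rw [eopPick]
  split
  · exact Sym2.other_mem _
  · exact Sym2.out_fst_mem e

lemma eopPick_spec {V : Type*} (B : Finset (Sym2 V)) (e : Sym2 V)
    (h : ∃ a, a ∈ e ∧ ∃ e' ∈ B, e' ≠ e ∧ a ∈ e') :
    ∃ c, c ∈ e ∧ (∃ e' ∈ B, e' ≠ e ∧ c ∈ e') ∧ s(c, eopPick B e) = e := by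
  rw [eopPick, dif_pos h]
  exact ⟨h.choose, h.choose_spec.1, h.choose_spec.2, Sym2.other_spec h.choose_spec.1⟩

/-- Any finite edge open packing set yields an independent set of the same size. -/
lemma eop_to_indep {V : Type*} (G : SimpleGraph V) (B : Finset (Sym2 V))
    (hB : IsEOPSet G ↑B) :
    ∃ S : Finset V, (∀ x ∈ S, ∀ y ∈ S, ¬ G.Adj x y) ∧ S.card = B.card := by
  classical
  have hedge : ∀ e ∈ B, e ∈ G.edgeSet := fun e he => hB.1 (Finset.mem_coe.mpr he)
  -- the shared vertex of an edge with the rest of `B` is unique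
  have factU : ∀ e ∈ B, ∀ a, a ∈ e → ∀ b, b ∈ e → a ≠ b →
      ∀ e₂ ∈ B, e₂ ≠ e → a ∈ e₂ → ∀ e₃ ∈ B, e₃ ≠ e → b ∈ e₃ → False := by
    intro e he a ha b hb hab e₂ he₂ hne₂ ha₂ e₃ he₃ hne₃ hb₃
    have heab : e = s(a, b) := (Sym2.mem_and_mem_iff hab).mp ⟨ha, hb⟩
    have hadj : G.Adj a b := by
      have h1 := hedge e he
      rw [heab] at h1
      exact G.mem_edgeSet.mp h1
    by_cases h23 : e₂ = e₃
    · subst h23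
      exact hne₂ (((Sym2.mem_and_mem_iff hab).mp ⟨ha₂, hb₃⟩).trans heab.symm)
    · rcases hB.2 e₂ (Finset.mem_coe.mpr he₂) e₃ (Finset.mem_coe.mpr he₃) h23
        a ha₂ b hb₃ hadj with h | h
      · exact hne₂ (h.symm.trans heab.symm)
      · exact hne₃ (h.symm.trans heab.symm)
  -- the pick avoids any shared vertex
  have hfne : ∀ e ∈ B, ∀ a, a ∈ e → (∃ e' ∈ B, e' ≠ e ∧ a ∈ e') → eopPick B e ≠ a := by
    intro e he a ha hsh
    obtain ⟨e', he', hne', ha'⟩ := hsh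
    obtain ⟨c, hc, ⟨e₂, he₂, hne₂, hc₂⟩, hspec⟩ :=
      eopPick_spec B e ⟨a, ha, e', he', hne', ha'⟩
    intro heq
    by_cases hac : a = c
    · have hecc : e = s(c, c) := by rw [← hspec, heq, hac]
      have hadj : G.Adj c c := by
        have h1 := hedge e he
        rw [hecc] at h1
        exact G.mem_edgeSet.mp h1
      exact G.irrefl hadj
    · exact factU e he c hc a ha (fun hh => hac hh.symm) e₂ he₂ hne₂ hc₂ e' he' hne' ha'
  refine ⟨B.image (eopPick B), ?_, ?_⟩
  · intro x hx y hy hadj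
    obtain ⟨e, he, rfl⟩ := Finset.mem_image.mp hx
    obtain ⟨e', he', rfl⟩ := Finset.mem_image.mp hy
    have hne : e ≠ e' := by
      rintro rfl
      exact G.irrefl hadj
    rcases hB.2 e (Finset.mem_coe.mpr he) e' (Finset.mem_coe.mpr he') hne
      _ (eopPick_mem B e) _ (eopPick_mem B e') hadj with h | h
    · have hmem : eopPick B e' ∈ e := by rw [← h]; exact Sym2.mem_mk_right _ _
      exact hfne e' he' _ (eopPick_mem B e') ⟨e, he, hne, hmem⟩ rfl
    · have hmem : eopPick B e ∈ e' := by rw [← h]; exact Sym2.mem_mk_left _ _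
      exact hfne e he _ (eopPick_mem B e) ⟨e', he', hne.symm, hmem⟩ rfl
  · apply Finset.card_image_of_injOn
    intro e he e' he' heq
    by_contra hne
    have hu : eopPick B e ∈ e' := by rw [heq]; exact eopPick_mem B e'
    exact hfne e (Finset.mem_coe.mp he) _ (eopPick_mem B e)
      ⟨e', Finset.mem_coe.mp he', fun hh => hne hh.symm, hu⟩ rfl

/-- An independent set in `K₂ ∘ G` yields an independent set in `G` of the same size. -/
lemma lex_indep {V : Type*} (G : SimpleGraph V) (S : Finset (Fin 2 × V))
    (hS : ∀ x ∈ S, ∀ y ∈ S, ¬ (lexProd (⊤ : SimpleGraph (Fin 2)) G).Adj x y) :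
    ∃ T : Finset V, (∀ x ∈ T, ∀ y ∈ T, ¬ G.Adj x y) ∧ T.card = S.card := by
  classical
  have hfst : ∀ x ∈ S, ∀ y ∈ S, x.1 = y.1 := by
    intro x hx y hy
    by_contra hne
    exact hS x hx y hy (Or.inl ((SimpleGraph.top_adj _ _).mpr hne))
  refine ⟨S.image Prod.snd, ?_, ?_⟩
  · intro a ha b hb hadj
    obtain ⟨x, hx, rfl⟩ := Finset.mem_image.mp ha
    obtain ⟨y, hy, rfl⟩ := Finset.mem_image.mp hb
    exact hS x hx y hy (Or.inr ⟨hfst x hx y hy, hadj⟩)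
  · apply Finset.card_image_of_injOn
    intro x hx y hy h2
    exact Prod.ext (hfst x hx y hy) h2

/-- An independent set in `G` yields an EOP set in `K₂ ∘ G` of the same size. -/
lemma indep_to_eop {V : Type*} (G : SimpleGraph V) (S : Finset V)
    (hS : ∀ x ∈ S, ∀ y ∈ S, ¬ G.Adj x y) (v : V) :
    ∃ B : Finset (Sym2 (Fin 2 × V)),
      IsEOPSet (lexProd (⊤ : SimpleGraph (Fin 2)) G) ↑B ∧ B.card = S.card := by
  classical
  refine ⟨S.image (fun g => s((((0:Fin 2), v) : Fin 2 × V), (((1:Fin 2), g) : Fin 2 × V))),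
    ⟨?_, ?_⟩, ?_⟩
  · intro e he
    simp only [Finset.coe_image, Set.mem_image, Finset.mem_coe] at he
    obtain ⟨g, hg, rfl⟩ := he
    rw [SimpleGraph.mem_edgeSet]
    refine Or.inl ((SimpleGraph.top_adj _ _).mpr ?_)
    simp
  · intro e₁ he₁ e₂ he₂ hne x hx y hy hadj
    simp only [Finset.coe_image, Set.mem_image, Finset.mem_coe] at he₁ he₂
    obtain ⟨a, ha, rfl⟩ := he₁
    obtain ⟨b, hb, rfl⟩ := he₂
    have hadj' : (⊤ : SimpleGraph (Fin 2)).Adj x.1 y.1 ∨ (x.1 = y.1 ∧ G.Adj x.2 y.2) := hadj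
    rcases Sym2.mem_iff.mp hx with rfl | rfl <;> rcases Sym2.mem_iff.mp hy with rfl | rfl
    · exact absurd hadj ((lexProd (⊤ : SimpleGraph (Fin 2)) G).irrefl)
    · exact Or.inr rfl
    · exact Or.inl Sym2.eq_swap
    · rcases hadj' with hh | ⟨-, hh⟩
      · exact absurd hh (by simp)
      · exact absurd hh (hS a ha b hb)
  · rw [Finset.card_image_of_injOn]
    intro a _ b _ hab
    rcases Sym2.eq_iff.mp hab with ⟨-, h2⟩ | ⟨h1, -⟩
    · exact (Prod.ext_iff.mp h2).2
    · exact absurd (Prod.ext_iff.mp h1).1 (by simp)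

/-- For any graph `G` without isolated vertices, `ρₑᵒ(K₂ ∘ G) = α(G)`. -/
theorem stmt_8 {V : Type*} [Fintype V] (G : SimpleGraph V)
    (h : ∀ v : V, ∃ w, G.Adj v w) :
    eopNum (lexProd (⊤ : SimpleGraph (Fin 2)) G) = _root_.indepNum G := by
  classical
  have hbddI : BddAbove {n | ∃ S : Finset V,
      (∀ x ∈ S, ∀ y ∈ S, ¬ G.Adj x y) ∧ S.card = n} := by
    refine ⟨Fintype.card V, ?_⟩
    rintro n ⟨S, -, rfl⟩
    exact S.card_le_univ
  have hbddE : BddAbove {n | ∃ B : Finset (Sym2 (Fin 2 × V)),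
      IsEOPSet (lexProd (⊤ : SimpleGraph (Fin 2)) G) ↑B ∧ B.card = n} := by
    refine ⟨Fintype.card (Sym2 (Fin 2 × V)), ?_⟩
    rintro n ⟨B, -, rfl⟩
    exact B.card_le_univ
  rw [eopNum, _root_.indepNum]
  apply le_antisymm
  · apply csSup_le
    · exact ⟨0, ∅, ⟨by simp, by simp⟩, by simp⟩
    · rintro n ⟨B, hB, rfl⟩
      obtain ⟨S, hSind, hScard⟩ := eop_to_indep _ B hB
      obtain ⟨T, hTind, hTcard⟩ := lex_indep G S hSind
      exact le_csSup hbddI ⟨T, hTind, by rw [hTcard, hScard]⟩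
  · apply csSup_le
    · exact ⟨0, ∅, by simp, by simp⟩
    · rintro n ⟨S, hSind, rfl⟩
      rcases S.eq_empty_or_nonempty with rfl | ⟨v, -⟩
      · simp
      · obtain ⟨B, hB, hBcard⟩ := indep_to_eop G S hSind v
        exact le_csSup hbddE ⟨B, hB, hBcard⟩
end

section
/- For arbitrary graphs G and H, ρ_e^o(G × H) ≥ max{ ρ_e^o(G)·δ(H)·ρ^o(H), ρ_e^o(H)·δ(G)·ρ^o(G) }, where × is the direct product. -/
open SimpleGraph

lemma aux_sym2_eq_of_mem {α : Type*} {a b : α} {e : Sym2 α} (hab : a ≠ b)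
    (ha : a ∈ e) (hb : b ∈ e) : e = s(a, b) := by
  induction e using Sym2.ind with
  | _ x y =>
    rw [Sym2.mem_iff] at ha hb
    rcases ha with rfl | rfl <;> rcases hb with rfl | rfl
    · exact absurd rfl hab
    · rfl
    · exact Sym2.eq_swap
    · exact absurd rfl hab

open scoped Classical in
noncomputable def hdAux {V : Type*} (B : Finset (Sym2 V)) (e : Sym2 V) : V :=
  if h : ∃ v, v ∈ e ∧ ∃ e' ∈ B, e' ≠ e ∧ v ∈ e' then h.choose else (Quot.out e).1

lemma hdAux_mem {V : Type*} (B : Finset (Sym2 V)) (e : Sym2 V) : hdAux B e ∈ e := by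
  unfold hdAux
  split
  · next h => exact h.choose_spec.1
  · exact Sym2.out_fst_mem e

lemma hdAux_shared {V : Type*} {G : SimpleGraph V} {B : Finset (Sym2 V)}
    (hB : IsEOPSet G ↑B) {e₁ e₂ : Sym2 V} (h₁ : e₁ ∈ B) (h₂ : e₂ ∈ B)
    (hne : e₁ ≠ e₂) {v : V} (hv₁ : v ∈ e₁) (hv₂ : v ∈ e₂) : v = hdAux B e₁ := by
  have hex : ∃ w, w ∈ e₁ ∧ ∃ e' ∈ B, e' ≠ e₁ ∧ w ∈ e' :=
    ⟨v, hv₁, e₂, h₂, hne.symm, hv₂⟩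
  have hex' : ∃ w, w ∈ e₁ ∧ ∃ e' ∈ B, e' ≠ e₁ ∧ w ∈ e' := hex
  have hd_eq : hdAux B e₁ = hex'.choose := by
    unfold hdAux; rw [dif_pos hex']
  obtain ⟨hv', e', he'B, he'ne, hv'e'⟩ := hex'.choose_spec
  rw [hd_eq]
  by_contra hvv
  have he₁ : e₁ = s(v, hex'.choose) := aux_sym2_eq_of_mem hvv hv₁ hv'
  have hadj : G.Adj v hex'.choose := by
    have := hB.1 (by exact_mod_cast h₁ : e₁ ∈ (↑B : Set (Sym2 V)))
    rw [he₁] at this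
    exact this
  by_cases hc : e₂ = e'
  · subst hc
    have : e₂ = s(v, hex.choose) := aux_sym2_eq_of_mem hvv hv₂ hv'e'
    exact hne (he₁.trans this.symm)
  · rcases hB.2 e₂ (by exact_mod_cast h₂) e' (by exact_mod_cast he'B) hc v hv₂
      hex'.choose hv'e' hadj with h | h
    · exact hne (he₁.trans h)
    · exact he'ne (h.symm.trans he₁.symm)

noncomputable def tlAux {V : Type*} (B : Finset (Sym2 V)) (e : Sym2 V) : V :=
  Sym2.Mem.other (hdAux_mem B e)

lemma hd_tl_eq {V : Type*} (B : Finset (Sym2 V)) (e : Sym2 V) :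
    s(hdAux B e, tlAux B e) = e := by
  unfold tlAux; exact Sym2.other_spec _

lemma tlAux_mem {V : Type*} (B : Finset (Sym2 V)) (e : Sym2 V) : tlAux B e ∈ e := by
  unfold tlAux; exact Sym2.other_mem _

lemma adj_hd_tl {V : Type*} {G : SimpleGraph V} {B : Finset (Sym2 V)}
    (hB : IsEOPSet G ↑B) {e : Sym2 V} (he : e ∈ B) : G.Adj (hdAux B e) (tlAux B e) := by
  have := hB.1 (by exact_mod_cast he : e ∈ (↑B : Set (Sym2 V)))
  rw [← hd_tl_eq B e] at this
  exact this

lemma hd_ne_tl {V : Type*} {G : SimpleGraph V} {B : Finset (Sym2 V)}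
    (hB : IsEOPSet G ↑B) {e : Sym2 V} (he : e ∈ B) : hdAux B e ≠ tlAux B e :=
  (adj_hd_tl hB he).ne

lemma mem_hd_or_tl {V : Type*} (B : Finset (Sym2 V)) {e : Sym2 V} {v : V}
    (hv : v ∈ e) : v = hdAux B e ∨ v = tlAux B e := by
  rw [← hd_tl_eq B e] at hv
  exact Sym2.mem_iff.1 hv

lemma eop_bddAbove {α : Type*} [Fintype α] (S : Set ℕ)
    (hS : ∀ n ∈ S, ∃ B : Finset α, B.card = n) : BddAbove S := by
  refine ⟨Fintype.card α, fun n hn => ?_⟩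
  obtain ⟨B, hB⟩ := hS n hn
  exact hB ▸ Finset.card_le_univ B

lemma key {V W : Type*} [Fintype V] [Fintype W] (G : SimpleGraph V) (H : SimpleGraph W) :
    eopNum G * minDeg H * openPackNum H ≤ eopNum (tensorProd G H) := by
  classical
  -- extract an EOP set of G of maximum size
  have hBex : ∃ B : Finset (Sym2 V), IsEOPSet G ↑B ∧ B.card = eopNum G := by
    have : eopNum G ∈ {n | ∃ B : Finset (Sym2 V), IsEOPSet G ↑B ∧ B.card = n} := by
      apply Nat.sSup_mem
      · exact ⟨0, ∅, ⟨by simp, by simp⟩, by simp⟩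
      · exact eop_bddAbove _ (fun n ⟨B, _, hc⟩ => ⟨B, hc⟩)
    exact this
  obtain ⟨B, hB, hBcard⟩ := hBex
  -- extract an open packing of H of maximum size
  have hPex : ∃ P : Finset W,
      (∀ x ∈ P, ∀ y ∈ P, x ≠ y → ∀ z, ¬ (H.Adj x z ∧ H.Adj y z)) ∧
      P.card = openPackNum H := by
    have : openPackNum H ∈ {n | ∃ P : Finset W,
        (∀ x ∈ P, ∀ y ∈ P, x ≠ y → ∀ z, ¬ (H.Adj x z ∧ H.Adj y z)) ∧ P.card = n} := by
      apply Nat.sSup_mem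
      · exact ⟨0, ∅, ⟨by simp, by simp⟩⟩
      · exact eop_bddAbove _ (fun n ⟨P, _, hc⟩ => ⟨P, hc⟩)
    exact this
  obtain ⟨P, hP, hPcard⟩ := hPex
  set δ := minDeg H with hδdef
  -- minimum degree bound
  have hδ : ∀ p : W, δ ≤ ((H.neighborSet p).toFinite.toFinset).card := by
    intro p
    have h1 : δ ≤ (H.neighborSet p).ncard := Nat.sInf_le ⟨p, rfl⟩
    rwa [Set.ncard_eq_toFinset_card _ (H.neighborSet p).toFinite] at h1
  -- choose δ neighbors of each vertex
  have hNpex : ∀ p : W, ∃ N ⊆ (H.neighborSet p).toFinite.toFinset, N.card = δ :=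
    fun p => Finset.exists_subset_card_eq (hδ p)
  set Np : W → Finset W := fun p => (hNpex p).choose with hNpdef
  have hNp_adj : ∀ p, ∀ q ∈ Np p, H.Adj p q := by
    intro p q hq
    have := (hNpex p).choose_spec.1 hq
    rwa [Set.Finite.mem_toFinset] at this
  have hNp_card : ∀ p, (Np p).card = δ := fun p => (hNpex p).choose_spec.2
  -- the open-packing property in the form we need
  have hP' : ∀ p₁ ∈ P, ∀ p₂ ∈ P, ∀ z, H.Adj p₁ z → H.Adj p₂ z → p₁ = p₂ := by
    intro p₁ h₁ p₂ h₂ z ha₁ ha₂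
    by_contra hne
    exact hP p₁ h₁ p₂ h₂ hne z ⟨ha₁, ha₂⟩
  -- the pair set
  set Q : Finset (W × W) := P.biUnion (fun p => (Np p).image (fun q => (p, q))) with hQdef
  have hQmem : ∀ p q, (p, q) ∈ Q ↔ p ∈ P ∧ q ∈ Np p := by
    intro p q
    simp only [hQdef, Finset.mem_biUnion, Finset.mem_image, Prod.mk.injEq]
    constructor
    · rintro ⟨p', hp', q', hq', rfl, rfl⟩; exact ⟨hp', hq'⟩
    · rintro ⟨hp, hq⟩; exact ⟨p, hp, q, hq, rfl, rfl⟩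
  have hQcard : Q.card = P.card * δ := by
    rw [hQdef, Finset.card_biUnion]
    · rw [Finset.sum_congr rfl (fun p _ => ?_), Finset.sum_const, smul_eq_mul]
      rw [Finset.card_image_of_injective _ (fun a b h => by injection h), hNp_card]
    · intro p hp p' hp' hne
      unfold Function.onFun
      rw [Finset.disjoint_left]
      rintro ⟨a, b⟩ ha hb
      simp only [Finset.mem_image, Prod.mk.injEq] at ha hb
      obtain ⟨q, _, rfl, rfl⟩ := ha
      obtain ⟨q', _, rfl, _⟩ := hb
      exact hne rfl
  -- the edge set of the product
  set f : Sym2 V × (W × W) → Sym2 (V × W) :=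
    fun x => s((hdAux B x.1, x.2.1), (tlAux B x.1, x.2.2)) with hfdef
  set B' : Finset (Sym2 (V × W)) := (B ×ˢ Q).image f with hB'def
  -- hcore: the structural lemma
  have hcore : ∀ e₁ ∈ B, ∀ e₂ ∈ B, e₁ ≠ e₂ → ∀ a ∈ e₁, ∀ b ∈ e₂, G.Adj a b →
      (b = hdAux B e₁ ∧ b = hdAux B e₂ ∧ a = tlAux B e₁) ∨
      (a = hdAux B e₁ ∧ a = hdAux B e₂ ∧ b = tlAux B e₂) := by
    intro e₁ h₁ e₂ h₂ hne a ha b hb hab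
    rcases hB.2 e₁ (by exact_mod_cast h₁) e₂ (by exact_mod_cast h₂) hne a ha b hb hab
      with h | h
    · left
      have hbe₁ : b ∈ e₁ := h ▸ Sym2.mem_mk_right a b
      have hbh₁ : b = hdAux B e₁ := hdAux_shared hB h₁ h₂ hne hbe₁ hb
      have hbh₂ : b = hdAux B e₂ := hdAux_shared hB h₂ h₁ hne.symm hb hbe₁
      refine ⟨hbh₁, hbh₂, ?_⟩
      rcases mem_hd_or_tl B ha with h' | h'
      · exact absurd (h'.trans hbh₁.symm) hab.ne
      · exact h'
    · right
      have hae₂ : a ∈ e₂ := h ▸ Sym2.mem_mk_left a b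
      have hah₂ : a = hdAux B e₂ := hdAux_shared hB h₂ h₁ hne.symm hae₂ ha
      have hah₁ : a = hdAux B e₁ := hdAux_shared hB h₁ h₂ hne ha hae₂
      refine ⟨hah₁, hah₂, ?_⟩
      rcases mem_hd_or_tl B hb with h' | h'
      · exact absurd (h'.trans hah₂.symm) hab.ne'
      · exact h'
  -- B' is an EOP set of the tensor product
  have hEOP : IsEOPSet (tensorProd G H) ↑B' := by
    constructor
    · intro e' he'
      simp only [hB'def, Finset.coe_image, Set.mem_image, Finset.mem_coe,
        Finset.mem_product] at he'
      obtain ⟨⟨e, p, q⟩, ⟨heB, hpq⟩, rfl⟩ := he'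
      rw [hQmem] at hpq
      exact ⟨adj_hd_tl hB heB, hNp_adj p q hpq.2⟩
    · intro f₁ hf₁ f₂ hf₂ hne x hx y hy hxy
      simp only [hB'def, Finset.coe_image, Set.mem_image, Finset.mem_coe,
        Finset.mem_product] at hf₁ hf₂
      obtain ⟨⟨e₁, p₁, q₁⟩, ⟨he₁B, hpq₁⟩, rfl⟩ := hf₁
      obtain ⟨⟨e₂, p₂, q₂⟩, ⟨he₂B, hpq₂⟩, rfl⟩ := hf₂
      rw [hQmem] at hpq₁ hpq₂
      obtain ⟨hp₁, hq₁⟩ := hpq₁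
      obtain ⟨hp₂, hq₂⟩ := hpq₂
      simp only [hfdef] at hx hy ⊢
      obtain ⟨hadj1, hadj2⟩ : G.Adj x.1 y.1 ∧ H.Adj x.2 y.2 := hxy
      rcases Sym2.mem_iff.1 hx with rfl | rfl <;> rcases Sym2.mem_iff.1 hy with rfl | rfl
      · -- case A: heads
        exfalso
        by_cases hee : e₁ = e₂
        · subst hee; exact G.loopless.irrefl _ hadj1
        · rcases hcore e₁ he₁B e₂ he₂B hee _ (hdAux_mem B e₁) _ (hdAux_mem B e₂) hadj1
            with ⟨h1, _, _⟩ | ⟨_, h2, _⟩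
          · exact G.loopless.irrefl _ (h1 ▸ hadj1)
          · exact G.loopless.irrefl _ (h2 ▸ hadj1)
      · -- case B: head, tail
        right
        have hpp : p₁ = p₂ := hP' p₁ hp₁ p₂ hp₂ q₂ hadj2 (hNp_adj p₂ q₂ hq₂)
        by_cases hee : e₁ = e₂
        · subst hee; rw [hpp]
        · rcases hcore e₁ he₁B e₂ he₂B hee _ (hdAux_mem B e₁) _ (tlAux_mem B e₂) hadj1
            with ⟨_, h2, _⟩ | ⟨_, h2, _⟩
          · exact absurd h2.symm (hd_ne_tl hB he₂B)
          · rw [hpp, h2]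
      · -- case C: tail, head
        left
        have hpp : p₂ = p₁ := hP' p₂ hp₂ p₁ hp₁ q₁ hadj2.symm (hNp_adj p₁ q₁ hq₁)
        by_cases hee : e₁ = e₂
        · subst hee; rw [hpp, Sym2.eq_swap]
        · rcases hcore e₁ he₁B e₂ he₂B hee _ (tlAux_mem B e₁) _ (hdAux_mem B e₂) hadj1
            with ⟨h1, h2, _⟩ | ⟨h1, _, _⟩
          · rw [hpp, ← h1, Sym2.eq_swap]
          · exact absurd h1.symm (hd_ne_tl hB he₁B)
      · -- case D: tails
        exfalso
        by_cases hee : e₁ = e₂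
        · subst hee; exact G.loopless.irrefl _ hadj1
        · rcases hcore e₁ he₁B e₂ he₂B hee _ (tlAux_mem B e₁) _ (tlAux_mem B e₂) hadj1
            with ⟨_, h2, _⟩ | ⟨h1, _, _⟩
          · exact (hd_ne_tl hB he₂B) h2.symm
          · exact (hd_ne_tl hB he₁B) h1.symm
  -- cardinality of B'
  have hB'card : B'.card = B.card * (P.card * δ) := by
    rw [hB'def, Finset.card_image_of_injOn, Finset.card_product, hQcard]
    rintro ⟨e₁, p₁, q₁⟩ hm₁ ⟨e₂, p₂, q₂⟩ hm₂ heq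
    simp only [Finset.coe_product, Set.mem_prod, Finset.mem_coe, Finset.mem_product] at hm₁ hm₂
    simp only [hfdef, Sym2.eq_iff, Prod.mk.injEq] at heq
    rcases heq with ⟨⟨hh, hp⟩, ⟨ht, hq⟩⟩ | ⟨⟨h1, hp⟩, ⟨h2, hq⟩⟩
    · have : e₁ = e₂ := by rw [← hd_tl_eq B e₁, hh, ht, hd_tl_eq]
      subst this
      simp [hp, hq]
    · exfalso
      have he : e₁ = e₂ := by rw [← hd_tl_eq B e₁, h1, h2, Sym2.eq_swap, hd_tl_eq]
      subst he
      exact (hd_ne_tl hB hm₁.1) h1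
  -- conclude
  have hmem : B'.card ∈ {n | ∃ C : Finset (Sym2 (V × W)),
      IsEOPSet (tensorProd G H) ↑C ∧ C.card = n} := ⟨B', hEOP, rfl⟩
  have hle : B'.card ≤ eopNum (tensorProd G H) :=
    le_csSup (eop_bddAbove _ (fun n ⟨C, _, hc⟩ => ⟨C, hc⟩)) hmem
  calc eopNum G * δ * openPackNum H = B.card * (P.card * δ) := by
        rw [hBcard, hPcard]; ring
    _ = B'.card := hB'card.symm
    _ ≤ _ := hle

lemma eop_tensor_swap {V W : Type*} [Fintype V] [Fintype W]
    (G : SimpleGraph V) (H : SimpleGraph W) :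
    eopNum (tensorProd H G) ≤ eopNum (tensorProd G H) := by
  classical
  have hBex : eopNum (tensorProd H G) ∈ {n | ∃ B : Finset (Sym2 (W × V)),
      IsEOPSet (tensorProd H G) ↑B ∧ B.card = n} := by
    apply Nat.sSup_mem
    · exact ⟨0, ∅, ⟨by simp, by simp⟩, by simp⟩
    · exact eop_bddAbove _ (fun n ⟨B, _, hc⟩ => ⟨B, hc⟩)
  obtain ⟨B, hB, hBcard⟩ := hBex
  set B' : Finset (Sym2 (V × W)) := B.image (Sym2.map Prod.swap) with hB'def
  have hEOP : IsEOPSet (tensorProd G H) ↑B' := by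
    constructor
    · intro e' he'
      simp only [hB'def, Finset.coe_image, Set.mem_image, Finset.mem_coe] at he'
      obtain ⟨e, heB, rfl⟩ := he'
      have he : e ∈ (tensorProd H G).edgeSet := hB.1 (by exact_mod_cast heB)
      induction e using Sym2.ind with
      | _ a b =>
        rw [Sym2.map_pair_eq]
        rw [SimpleGraph.mem_edgeSet] at he ⊢
        exact ⟨he.2, he.1⟩
    · intro f₁ hf₁ f₂ hf₂ hne x hx y hy hxy
      simp only [hB'def, Finset.coe_image, Set.mem_image, Finset.mem_coe] at hf₁ hf₂
      obtain ⟨e₁, he₁, rfl⟩ := hf₁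
      obtain ⟨e₂, he₂, rfl⟩ := hf₂
      obtain ⟨x₀, hx₀, rfl⟩ := Sym2.mem_map.1 hx
      obtain ⟨y₀, hy₀, rfl⟩ := Sym2.mem_map.1 hy
      have hne' : e₁ ≠ e₂ := fun h => hne (congrArg _ h)
      have hadj : (tensorProd H G).Adj x₀ y₀ := ⟨hxy.2, hxy.1⟩
      rcases hB.2 e₁ (by exact_mod_cast he₁) e₂ (by exact_mod_cast he₂) hne'
        x₀ hx₀ y₀ hy₀ hadj with h | h
      · left; rw [← h, Sym2.map_pair_eq]
      · right; rw [← h, Sym2.map_pair_eq]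
  have hcard : B'.card = B.card :=
    Finset.card_image_of_injective _ (Sym2.map.injective Prod.swap_injective)
  have hle : B'.card ≤ eopNum (tensorProd G H) :=
    le_csSup (eop_bddAbove _ (fun n ⟨C, _, hc⟩ => ⟨C, hc⟩)) ⟨B', hEOP, rfl⟩
  rw [← hBcard, ← hcard]
  exact hle

/-- For arbitrary graphs `G` and `H`,
`ρₑᵒ(G × H) ≥ max{ρₑᵒ(G)·δ(H)·ρᵒ(H), ρₑᵒ(H)·δ(G)·ρᵒ(G)}`. -/
theorem stmt_10 {V W : Type*} [Fintype V] [Fintype W]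
    (G : SimpleGraph V) (H : SimpleGraph W) :
    max (eopNum G * minDeg H * openPackNum H) (eopNum H * minDeg G * openPackNum G) ≤
      eopNum (tensorProd G H) :=
  max_le (key G H) (le_trans (key H G) (eop_tensor_swap G H))
end

section
/- For m ≥ n ≥ 4, the induced matching number of the direct product of complete graphs satisfies ν_I(K_m × K_n) = 2. -/
open SimpleGraph

lemma twin_eq {m n : ℕ} {u1 v1 u2 v2 : Fin m × Fin n}
    (h1 : u1.1 ≠ v1.1) (h2 : u1.2 ≠ v1.2) (h3 : u2.1 ≠ v2.1) (h4 : u2.2 ≠ v2.2)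
    (p1 : u1.1 = u2.1 ∨ u1.2 = u2.2) (p2 : u1.1 = v2.1 ∨ u1.2 = v2.2)
    (p3 : v1.1 = u2.1 ∨ v1.2 = u2.2) (p4 : v1.1 = v2.1 ∨ v1.2 = v2.2) :
    s(u2, v2) = s((u1.1, v1.2), (v1.1, u1.2)) := by
  obtain ⟨a,b⟩ := u1; obtain ⟨a',b'⟩ := v1; obtain ⟨c,d⟩ := u2; obtain ⟨c',d'⟩ := v2
  simp only at *
  rcases p1 with h|h <;> rcases p2 with h'|h' <;> rcases p3 with h''|h'' <;>
    rcases p4 with h'''|h''' <;> subst_vars <;>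
    simp_all [Sym2.eq_iff, Prod.ext_iff]

lemma adj_iff {m n : ℕ} (x y : Fin m × Fin n) :
    (tensorProd (⊤ : SimpleGraph (Fin m)) (⊤ : SimpleGraph (Fin n))).Adj x y ↔
      x.1 ≠ y.1 ∧ x.2 ≠ y.2 := Iff.rfl

lemma card_le_two {m n : ℕ}
    (M : Finset (Sym2 (Fin m × Fin n)))
    (hM : IsInducedMatching (tensorProd (⊤ : SimpleGraph (Fin m)) (⊤ : SimpleGraph (Fin n))) ↑M) :
    M.card ≤ 2 := by
  by_contra h
  push_neg at h
  obtain ⟨e1, e2, e3, he1, he2, he3, h12, h13, h23⟩ := Finset.two_lt_card_iff.mp h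
  obtain ⟨hsub, hind⟩ := hM
  obtain ⟨⟨u1, v1⟩, he1'⟩ := Quot.exists_rep e1
  obtain ⟨⟨u2, v2⟩, he2'⟩ := Quot.exists_rep e2
  obtain ⟨⟨u3, v3⟩, he3'⟩ := Quot.exists_rep e3
  subst he1' he2' he3'
  have a1 := hsub he1
  have a2 := hsub he2
  have a3 := hsub he3
  rw [mem_edgeSet, adj_iff] at a1 a2 a3
  have key : ∀ u v : Fin m × Fin n, s(u,v) ∈ M → s(u,v) ≠ s(u1,v1) →
      u.1 ≠ v.1 → u.2 ≠ v.2 → s(u, v) = s((u1.1, v1.2), (v1.1, u1.2)) := by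
    intro u v hmem hne hu hv
    have n1 := hind _ he1 _ hmem hne.symm u1 (by simp) u (by simp)
    have n2 := hind _ he1 _ hmem hne.symm u1 (by simp) v (by simp)
    have n3 := hind _ he1 _ hmem hne.symm v1 (by simp) u (by simp)
    have n4 := hind _ he1 _ hmem hne.symm v1 (by simp) v (by simp)
    rw [adj_iff] at n1 n2 n3 n4
    push_neg at n1 n2 n3 n4
    refine twin_eq a1.1 a1.2 hu hv ?_ ?_ ?_ ?_
    · by_cases hc : u1.1 = u.1
      · exact Or.inl hc
      · exact Or.inr (n1 hc)
    · by_cases hc : u1.1 = v.1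
      · exact Or.inl hc
      · exact Or.inr (n2 hc)
    · by_cases hc : v1.1 = u.1
      · exact Or.inl hc
      · exact Or.inr (n3 hc)
    · by_cases hc : v1.1 = v.1
      · exact Or.inl hc
      · exact Or.inr (n4 hc)
  have k2 := key u2 v2 he2 (by exact h12.symm) a2.1 a2.2
  have k3 := key u3 v3 he3 (by exact h13.symm) a3.1 a3.2
  exact h23 (k2.trans k3.symm)

/-- For `m ≥ n ≥ 4`, `ν_I(K_m × K_n) = 2`. -/
theorem stmt_11 (m n : ℕ) (h1 : 4 ≤ n) (h2 : n ≤ m) :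
    inducedMatchingNum
      (tensorProd (⊤ : SimpleGraph (Fin m)) (⊤ : SimpleGraph (Fin n))) = 2 := by
  have hm : 4 ≤ m := le_trans h1 h2
  set f0 : Fin m := ⟨0, by omega⟩
  set f1 : Fin m := ⟨1, by omega⟩
  set g0 : Fin n := ⟨0, by omega⟩
  set g1 : Fin n := ⟨1, by omega⟩
  set A : Sym2 (Fin m × Fin n) := s((f0, g0), (f1, g1))
  set B : Sym2 (Fin m × Fin n) := s((f0, g1), (f1, g0))
  have hf : f0 ≠ f1 := by simp [f0, f1, Fin.ext_iff]
  have hg : g0 ≠ g1 := by simp [g0, g1, Fin.ext_iff]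
  have hAB : A ≠ B := by
    simp [A, B, Sym2.eq_iff, Prod.ext_iff]
    tauto
  have hmem : 2 ∈ {k | ∃ M : Finset (Sym2 (Fin m × Fin n)),
      IsInducedMatching (tensorProd (⊤ : SimpleGraph (Fin m)) (⊤ : SimpleGraph (Fin n))) ↑M ∧
      M.card = k} := by
    refine ⟨{A, B}, ⟨?_, ?_⟩, by rw [Finset.card_insert_of_notMem (by simpa using hAB)]; simp⟩
    · intro e he
      simp only [Finset.coe_insert, Finset.coe_singleton, Set.mem_insert_iff,
        Set.mem_singleton_iff] at he
      rcases he with rfl | rfl <;> rw [mem_edgeSet, adj_iff] <;> first | exact ⟨hf, hg⟩ | exact ⟨hf, hg.symm⟩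
    · intro e1 he1 e2 he2 hne x hx y hy hadj
      rw [adj_iff] at hadj
      simp only [Finset.coe_insert, Finset.coe_singleton, Set.mem_insert_iff,
        Set.mem_singleton_iff] at he1 he2
      rcases he1 with rfl | rfl <;> rcases he2 with rfl | rfl <;>
        simp_all [A, B, Sym2.mem_iff] <;>
        rcases hx with rfl | rfl <;> rcases hy with rfl | rfl <;> simp_all
  apply le_antisymm
  · apply csSup_le ⟨2, hmem⟩
    rintro k ⟨M, hM, rfl⟩
    exact card_le_two M hM
  · apply le_csSup
    · refine ⟨2, ?_⟩
      rintro k ⟨M, hM, rfl⟩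
      exact card_le_two M hM
    · exact hmem
end

section
/- For m ≥ n ≥ 3 with (m,n) ≠ (3,3), ρ_e^o(K_m × K_n) = m − 1, and ρ_e^o(K_3 × K_3) = 2. -/
open SimpleGraph

section AuxEOP

open SimpleGraph

variable {m n : ℕ}

private abbrev KKG (m n : ℕ) : SimpleGraph (Fin m × Fin n) :=
  tensorProd (⊤ : SimpleGraph (Fin m)) (⊤ : SimpleGraph (Fin n))

private lemma KKG_adj {x y : Fin m × Fin n} :
    (KKG m n).Adj x y ↔ x.1 ≠ y.1 ∧ x.2 ≠ y.2 := Iff.rfl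

/-- Rectangle core: two disjoint "non-attacking" pairs pairwise non-adjacent force
the second pair to be the complementary diagonal of the first. -/
private lemma rect_core {a₁ a₂ a₃ a₄ : Fin m} {b₁ b₂ b₃ b₄ : Fin n}
    (h12a : a₁ ≠ a₂) (h12b : b₁ ≠ b₂) (h34a : a₃ ≠ a₄) (h34b : b₃ ≠ b₄)
    (h13 : a₁ = a₃ ∨ b₁ = b₃) (h14 : a₁ = a₄ ∨ b₁ = b₄)
    (h23 : a₂ = a₃ ∨ b₂ = b₃) (h24 : a₂ = a₄ ∨ b₂ = b₄) :
    ((a₃, b₃) = (a₁, b₂) ∧ (a₄, b₄) = (a₂, b₁)) ∨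
    ((a₃, b₃) = (a₂, b₁) ∧ (a₄, b₄) = (a₁, b₂)) := by
  simp only [ne_eq, Prod.mk.injEq, Fin.ext_iff] at *
  omega

/-- Endpoints of disjoint edges of an EOP set are pairwise non-adjacent. -/
private lemma disj_nonadj {B : Finset (Sym2 (Fin m × Fin n))}
    (hB : IsEOPSet (KKG m n) ↑B) {e f : Sym2 (Fin m × Fin n)}
    (he : e ∈ B) (hf : f ∈ B) (hne : e ≠ f) (hdisj : ∀ x ∈ e, x ∉ f)
    {x y : Fin m × Fin n} (hx : x ∈ e) (hy : y ∈ f) : ¬ (KKG m n).Adj x y := by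
  intro hadj
  rcases hB.2 e he f hf hne x hx y hy hadj with h | h
  · exact hdisj y (h ▸ Sym2.mem_mk_right x y) hy
  · exact hdisj x hx (h ▸ Sym2.mem_mk_left x y)

/-- A disjoint edge in an EOP set is the complementary diagonal. -/
private lemma rect_edge {B : Finset (Sym2 (Fin m × Fin n))}
    (hB : IsEOPSet (KKG m n) ↑B) {a₁ a₂ : Fin m} {b₁ b₂ : Fin n}
    {f : Sym2 (Fin m × Fin n)}
    (he : s((a₁, b₁), (a₂, b₂)) ∈ B) (hf : f ∈ B)
    (hdisj : ∀ x ∈ s((a₁, b₁), (a₂, b₂)), x ∉ f) :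
    f = s((a₁, b₂), (a₂, b₁)) := by
  obtain ⟨⟨⟨a₃, b₃⟩, ⟨a₄, b₄⟩⟩, rfl⟩ := f.exists_rep
  replace hf : s((a₃, b₃), (a₄, b₄)) ∈ B := hf
  replace hdisj : ∀ x ∈ s((a₁, b₁), (a₂, b₂)), x ∉ s((a₃, b₃), (a₄, b₄)) := hdisj
  have hne : s((a₁, b₁), (a₂, b₂)) ≠ s((a₃, b₃), (a₄, b₄)) := by
    intro h
    exact hdisj _ (Sym2.mem_mk_left _ _) (h ▸ Sym2.mem_mk_left _ _)
  have h13 := disj_nonadj hB he hf hne hdisj (Sym2.mem_mk_left _ _) (Sym2.mem_mk_left _ _)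
  have h14 := disj_nonadj hB he hf hne hdisj (Sym2.mem_mk_left _ _) (Sym2.mem_mk_right _ _)
  have h23 := disj_nonadj hB he hf hne hdisj (Sym2.mem_mk_right _ _) (Sym2.mem_mk_left _ _)
  have h24 := disj_nonadj hB he hf hne hdisj (Sym2.mem_mk_right _ _) (Sym2.mem_mk_right _ _)
  simp only [KKG_adj, not_and_or, not_ne_iff] at h13 h14 h23 h24
  obtain ⟨ha12, hb12⟩ := KKG_adj.mp (hB.1 he)
  obtain ⟨ha34, hb34⟩ := KKG_adj.mp (hB.1 hf)
  show s((a₃, b₃), (a₄, b₄)) = s((a₁, b₂), (a₂, b₁))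
  rw [Sym2.eq_iff]
  exact rect_core ha12 hb12 ha34 hb34 h13 h14 h23 h24

/-- If an EOP set contains two disjoint edges, every edge equals one of the two. -/
private lemma disj_pair {B : Finset (Sym2 (Fin m × Fin n))}
    (hB : IsEOPSet (KKG m n) ↑B) {e f : Sym2 (Fin m × Fin n)}
    (he : e ∈ B) (hf : f ∈ B) (hdisj : ∀ x ∈ e, x ∉ f) :
    ∀ g ∈ B, g = e ∨ g = f := by
  classical
  obtain ⟨⟨⟨a₁, b₁⟩, ⟨a₂, b₂⟩⟩, rfl⟩ := e.exists_rep
  replace he : s((a₁, b₁), (a₂, b₂)) ∈ B := he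
  replace hdisj : ∀ x ∈ s((a₁, b₁), (a₂, b₂)), x ∉ f := hdisj
  have hfe : f = s((a₁, b₂), (a₂, b₁)) := rect_edge hB he hf hdisj
  show ∀ g ∈ B, g = s((a₁, b₁), (a₂, b₂)) ∨ g = f
  intro g hg
  by_contra hcon
  push_neg at hcon
  obtain ⟨hgne, hgnf⟩ := hcon
  by_cases hge : ∀ x ∈ s((a₁, b₁), (a₂, b₂)), x ∉ g
  · exact hgnf ((rect_edge hB he hg hge).trans hfe.symm)
  · push_neg at hge
    obtain ⟨p, hpe, hpg⟩ := hge
    by_cases hgf : ∀ x ∈ f, x ∉ g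
    · -- g disjoint from f; rect based at f gives g = complementary of f = e
      subst hfe
      have := rect_edge hB hf hg hgf
      apply hgne
      rw [this, Sym2.eq_iff]
      tauto
    · push_neg at hgf
      obtain ⟨q, hqf, hqg⟩ := hgf
      have hef : s((a₁, b₁), (a₂, b₂)) ≠ f := by
        intro h
        exact hdisj _ (Sym2.mem_mk_left _ _) (h ▸ Sym2.mem_mk_left _ _)
      have hpq : p ≠ q := fun h => hdisj p hpe (h ▸ hqf)
      have hgeq : g = s(p, q) := Sym2.eq_of_ne_mem hpq hpg hqg
        (Sym2.mem_mk_left p q) (Sym2.mem_mk_right p q)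
      have hadj : (KKG m n).Adj p q := by
        rw [← SimpleGraph.mem_edgeSet, ← hgeq]; exact hB.1 hg
      rcases hB.2 _ he _ hf hef p hpe q hqf hadj with h | h
      · exact hdisj q (h ▸ Sym2.mem_mk_right p q) hqf
      · exact hdisj p hpe (h ▸ Sym2.mem_mk_left p q)

end AuxEOP

section AuxEOP2

open SimpleGraph

variable {m n : ℕ}

/-- Star leaves bound: independent sets among the neighbors of a vertex lie in a
row or a column. -/
private lemma leaf_bound (h1 : 3 ≤ n) (h2 : n ≤ m) (a₀ : Fin m) (b₀ : Fin n)
    (L : Finset (Fin m × Fin n))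
    (hL1 : ∀ x ∈ L, x.1 ≠ a₀) (hL2 : ∀ x ∈ L, x.2 ≠ b₀)
    (hind : ∀ x ∈ L, ∀ y ∈ L, x.1 = y.1 ∨ x.2 = y.2) :
    L.card ≤ m - 1 := by
  classical
  have hm : 3 ≤ m := le_trans h1 h2
  by_cases hcol : ∀ x ∈ L, ∀ y ∈ L, x.2 = y.2
  · -- all in one row (same second coordinate): inject via fst
    have hinj : Set.InjOn Prod.fst ↑L := fun x hx y hy h =>
      Prod.ext h (hcol x hx y hy)
    have hcard : L.card = (L.image Prod.fst).card :=
      (Finset.card_image_of_injOn hinj).symm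
    have hsub : L.image Prod.fst ⊆ Finset.univ.erase a₀ := by
      intro a ha
      obtain ⟨x, hx, rfl⟩ := Finset.mem_image.mp ha
      exact Finset.mem_erase.mpr ⟨hL1 x hx, Finset.mem_univ _⟩
    calc L.card = (L.image Prod.fst).card := hcard
      _ ≤ (Finset.univ.erase a₀).card := Finset.card_le_card hsub
      _ = m - 1 := by
        rw [Finset.card_erase_of_mem (Finset.mem_univ _)]
        simp
  · push_neg at hcol
    obtain ⟨x, hx, y, hy, hxy⟩ := hcol
    have ha : x.1 = y.1 := (hind x hx y hy).resolve_right hxy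
    have hrow : ∀ z ∈ L, z.1 = x.1 := by
      intro z hz
      rcases hind z hz x hx with h | hzx
      · exact h
      rcases hind z hz y hy with h | hzy
      · exact h.trans ha.symm
      · exact absurd (hzx.symm.trans hzy) hxy
    have hinj : Set.InjOn Prod.snd ↑L := fun u hu v hv h =>
      Prod.ext ((hrow u hu).trans (hrow v hv).symm) h
    have hcard : L.card = (L.image Prod.snd).card :=
      (Finset.card_image_of_injOn hinj).symm
    have hsub : L.image Prod.snd ⊆ Finset.univ.erase b₀ := by
      intro b hb
      obtain ⟨z, hz, rfl⟩ := Finset.mem_image.mp hb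
      exact Finset.mem_erase.mpr ⟨hL2 z hz, Finset.mem_univ _⟩
    calc L.card = (L.image Prod.snd).card := hcard
      _ ≤ (Finset.univ.erase b₀).card := Finset.card_le_card hsub
      _ = n - 1 := by
        rw [Finset.card_erase_of_mem (Finset.mem_univ _)]
        simp
      _ ≤ m - 1 := by omega

/-- The main upper bound. -/
private lemma eop_card_le (h1 : 3 ≤ n) (h2 : n ≤ m)
    (B : Finset (Sym2 (Fin m × Fin n))) (hB : IsEOPSet (KKG m n) ↑B) :
    B.card ≤ m - 1 := by
  classical
  have hm : 3 ≤ m := le_trans h1 h2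
  by_contra hcon
  push_neg at hcon
  have hB3 : 3 ≤ B.card := by omega
  by_cases hdis : ∃ e ∈ B, ∃ f ∈ B, ∀ x ∈ e, x ∉ f
  · obtain ⟨e, he, f, hf, hdisj⟩ := hdis
    have : B ⊆ {e, f} := by
      intro g hg
      rcases disj_pair hB he hf hdisj g hg with h | h <;> simp [h]
    have := Finset.card_le_card this
    have h2' : ({e, f} : Finset (Sym2 (Fin m × Fin n))).card ≤ 2 :=
      Finset.card_insert_le _ _ |>.trans (by simp)
    omega
  · -- pairwise intersecting
    push_neg at hdis
    -- extract two distinct edges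
    obtain ⟨e₁, he₁, e₂, he₂, hne⟩ := Finset.one_lt_card.mp (by omega : 1 < B.card)
    obtain ⟨v, hv₁, hv₂⟩ := hdis e₁ he₁ e₂ he₂
    -- every edge contains v
    have hstar : ∀ g ∈ B, v ∈ g := by
      intro g hg
      by_contra hvg
      have hg1 : g ≠ e₁ := fun h => hvg (h ▸ hv₁)
      have hg2 : g ≠ e₂ := fun h => hvg (h ▸ hv₂)
      obtain ⟨p, hpg, hpe⟩ := hdis g hg e₁ he₁
      obtain ⟨q, hqg, hqe⟩ := hdis g hg e₂ he₂
      have hpv : p ≠ v := fun h => hvg (h ▸ hpg)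
      have hqv : q ≠ v := fun h => hvg (h ▸ hqg)
      have hpq : p ≠ q := by
        intro h
        subst h
        exact hne (((Sym2.mem_and_mem_iff hpv).mp ⟨hpe, hv₁⟩).trans
          ((Sym2.mem_and_mem_iff hpv).mp ⟨hqe, hv₂⟩).symm)
      have hgeq : g = s(p, q) := Sym2.eq_of_ne_mem hpq hpg hqg
        (Sym2.mem_mk_left p q) (Sym2.mem_mk_right p q)
      have hadj : (KKG m n).Adj p q := by
        rw [← SimpleGraph.mem_edgeSet, ← hgeq]; exact hB.1 hg
      rcases hB.2 e₁ he₁ e₂ he₂ hne p hpe q hqe hadj with h | h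
      · exact hg1 (hgeq.trans h)
      · exact hg2 (hgeq.trans h)
    -- leaves
    set leaf : {e // e ∈ B} → Fin m × Fin n := fun e => Sym2.Mem.other (hstar e.1 e.2)
      with hleaf
    have hspec : ∀ e : {e // e ∈ B}, s(v, leaf e) = e.1 :=
      fun e => Sym2.other_spec (hstar e.1 e.2)
    have hadjleaf : ∀ e : {e // e ∈ B}, (KKG m n).Adj v (leaf e) := by
      intro e
      rw [← SimpleGraph.mem_edgeSet, hspec e]
      exact hB.1 e.2
    set L : Finset (Fin m × Fin n) := B.attach.image leaf with hL
    have hinj : Set.InjOn leaf ↑B.attach := by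
      intro e _ e' _ h
      have : e.1 = e'.1 := by rw [← hspec e, ← hspec e', h]
      exact Subtype.ext this
    have hcardL : L.card = B.card := by
      rw [hL, Finset.card_image_of_injOn hinj, Finset.card_attach]
    have hLmem : ∀ x ∈ L, ∃ e : {e // e ∈ B}, leaf e = x := by
      intro x hx
      obtain ⟨e, _, rfl⟩ := Finset.mem_image.mp hx
      exact ⟨e, rfl⟩
    have hL1 : ∀ x ∈ L, x.1 ≠ v.1 := by
      intro x hx
      obtain ⟨e, rfl⟩ := hLmem x hx
      exact (KKG_adj.mp (hadjleaf e)).1.symm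
    have hL2 : ∀ x ∈ L, x.2 ≠ v.2 := by
      intro x hx
      obtain ⟨e, rfl⟩ := hLmem x hx
      exact (KKG_adj.mp (hadjleaf e)).2.symm
    have hind : ∀ x ∈ L, ∀ y ∈ L, x.1 = y.1 ∨ x.2 = y.2 := by
      intro x hx y hy
      obtain ⟨e, rfl⟩ := hLmem x hx
      obtain ⟨f, rfl⟩ := hLmem y hy
      by_cases hef : e.1 = f.1
      · obtain rfl : e = f := Subtype.ext hef
        exact Or.inl rfl
      by_contra hcon2
      push_neg at hcon2
      have hadj : (KKG m n).Adj (leaf e) (leaf f) := KKG_adj.mpr hcon2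
      have hvne : ∀ g : {e // e ∈ B}, leaf g ≠ v :=
        fun g h => (KKG m n).irrefl (h ▸ hadjleaf g)
      rcases hB.2 e.1 e.2 f.1 f.2 hef (leaf e) (Sym2.other_mem _) (leaf f)
          (Sym2.other_mem _) hadj with h | h
      · rw [← hspec e, Sym2.eq_iff] at h
        rcases h with ⟨h', -⟩ | ⟨-, h'⟩
        · exact hvne e h'
        · exact hvne f h'
      · rw [← hspec f, Sym2.eq_iff] at h
        rcases h with ⟨h', -⟩ | ⟨-, h'⟩
        · exact hvne e h'
        · exact hvne f h'
    have := leaf_bound h1 h2 v.1 v.2 L hL1 hL2 hind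
    omega

end AuxEOP2

section AuxEOP3

open SimpleGraph

variable {m n : ℕ}

private lemma eop_lower (h1 : 3 ≤ n) (h2 : n ≤ m) :
    ∃ B : Finset (Sym2 (Fin m × Fin n)), IsEOPSet (KKG m n) ↑B ∧ B.card = m - 1 := by
  classical
  have hm : 3 ≤ m := le_trans h1 h2
  haveI : NeZero m := ⟨by omega⟩
  haveI : NeZero n := ⟨by omega⟩
  set c : Fin m × Fin n := (0, 0) with hc
  have h01 : (0 : Fin n) ≠ (1 : Fin n) := by
    simp [Fin.ext_iff, Nat.mod_eq_of_lt (by omega : 1 < n)]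
  refine ⟨(Finset.univ.erase (0 : Fin m)).image (fun a => s(c, (a, (1 : Fin n)))), ?_, ?_⟩
  · constructor
    · intro e he
      simp only [Finset.coe_image, Set.mem_image, Finset.mem_coe, Finset.mem_erase] at he
      obtain ⟨a, ⟨ha, -⟩, rfl⟩ := he
      rw [SimpleGraph.mem_edgeSet, KKG_adj]
      exact ⟨Ne.symm ha, h01⟩
    · intro e₁ he₁ e₂ he₂ hne x hx y hy hadj
      simp only [Finset.coe_image, Set.mem_image, Finset.mem_coe, Finset.mem_erase] at he₁ he₂
      obtain ⟨a, ⟨ha, -⟩, rfl⟩ := he₁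
      obtain ⟨a', ⟨ha', -⟩, rfl⟩ := he₂
      rw [Sym2.mem_iff] at hx hy
      rcases hx with rfl | rfl <;> rcases hy with rfl | rfl
      · exact absurd hadj ((KKG m n).irrefl)
      · exact Or.inr rfl
      · exact Or.inl (Sym2.eq_swap)
      · exact absurd (KKG_adj.mp hadj).2 (by simp)
  · rw [Finset.card_image_of_injOn, Finset.card_erase_of_mem (Finset.mem_univ _)]
    · simp
    · intro a ha a' ha' h
      simp only [Finset.coe_erase, Set.mem_diff, Finset.mem_coe, Finset.mem_univ,
        Set.mem_singleton_iff] at ha ha'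
      rw [Sym2.eq_iff] at h
      rcases h with ⟨-, h⟩ | ⟨h, -⟩
      · exact (Prod.ext_iff.mp h).1
      · exact absurd (Prod.ext_iff.mp h).2 h01
  
private lemma eop_eq (h1 : 3 ≤ n) (h2 : n ≤ m) : eopNum (KKG m n) = m - 1 := by
  obtain ⟨B, hB, hcard⟩ := eop_lower h1 h2
  have hbdd : ∀ k ∈ {k | ∃ C : Finset (Sym2 (Fin m × Fin n)),
      IsEOPSet (KKG m n) ↑C ∧ C.card = k}, k ≤ m - 1 := by
    rintro k ⟨C, hC, rfl⟩
    exact eop_card_le h1 h2 C hC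
  refine le_antisymm (csSup_le ⟨m - 1, B, hB, hcard⟩ hbdd) (le_csSup ⟨m - 1, hbdd⟩ ?_)
  exact ⟨B, hB, hcard⟩

end AuxEOP3


/-- For `m ≥ n ≥ 3` with `(m,n) ≠ (3,3)`, `ρₑᵒ(K_m × K_n) = m − 1`;
moreover `ρₑᵒ(K₃ × K₃) = 2`. -/
theorem stmt_12 (m n : ℕ) (h1 : 3 ≤ n) (h2 : n ≤ m) :
    (¬ (m = 3 ∧ n = 3) →
      eopNum (tensorProd (⊤ : SimpleGraph (Fin m)) (⊤ : SimpleGraph (Fin n))) = m - 1) ∧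
    eopNum (tensorProd (⊤ : SimpleGraph (Fin 3)) (⊤ : SimpleGraph (Fin 3))) = 2 := by
  exact ⟨fun _ => eop_eq h1 h2, eop_eq (le_refl 3) (le_refl 3)⟩
end

section
/- For arbitrary graphs G and H, ρ_e^o(G ∘ H) ≤ min{ ρ_e^o(G ⊠ H), ρ_e^o(G □ H) }, where ∘, ⊠, □ denote the lexicographic, strong, and Cartesian products respectively. -/
open SimpleGraph

open Classical

namespace EOPAux

variable {V W : Type*}

noncomputable def ctr (B : Finset (Sym2 (V × W))) (e : Sym2 (V × W)) : V × W :=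
  if h : ∃ v, v ∈ e ∧ ∃ f ∈ B, f ≠ e ∧ v ∈ f then h.choose else e.out.1

noncomputable def lf (B : Finset (Sym2 (V × W))) (e : Sym2 (V × W)) : V × W :=
  if ctr B e = e.out.1 then e.out.2 else e.out.1

def crossE (e : Sym2 (V × W)) : Prop := e.out.1.1 ≠ e.out.2.1

lemma out_spec (e : Sym2 (V × W)) : s(e.out.1, e.out.2) = e := Quot.out_eq e

lemma ctr_mem (B : Finset (Sym2 (V × W))) (e : Sym2 (V × W)) : ctr B e ∈ e := by
  rw [ctr]
  split
  · next h => exact h.choose_spec.1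
  · exact Sym2.out_fst_mem e

lemma ctr_cases (B : Finset (Sym2 (V × W))) (e : Sym2 (V × W)) :
    (ctr B e = e.out.1 ∧ lf B e = e.out.2) ∨ (ctr B e = e.out.2 ∧ lf B e = e.out.1) := by
  by_cases h : ctr B e = e.out.1
  · exact Or.inl ⟨h, by rw [lf, if_pos h]⟩
  · refine Or.inr ⟨?_, by rw [lf, if_neg h]⟩
    have h2 : ctr B e ∈ s(e.out.1, e.out.2) := by rw [out_spec e]; exact ctr_mem B e
    rw [Sym2.mem_iff] at h2
    exact h2.resolve_left h

lemma ctr_lf_spec (B : Finset (Sym2 (V × W))) (e : Sym2 (V × W)) :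
    s(ctr B e, lf B e) = e := by
  rcases ctr_cases B e with ⟨h1, h2⟩ | ⟨h1, h2⟩ <;> rw [h1, h2]
  · exact out_spec e
  · rw [Sym2.eq_swap]; exact out_spec e

lemma lf_mem (B : Finset (Sym2 (V × W))) (e : Sym2 (V × W)) : lf B e ∈ e := by
  have h : lf B e ∈ s(ctr B e, lf B e) := Sym2.mem_mk_right _ _
  rwa [ctr_lf_spec] at h

lemma ctr_mem' (B : Finset (Sym2 (V × W))) (e : Sym2 (V × W)) : ctr B e ∈ e := ctr_mem B e

lemma mem_eq {B : Finset (Sym2 (V × W))} {e : Sym2 (V × W)} {x : V × W} (hx : x ∈ e) :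
    x = ctr B e ∨ x = lf B e := by
  have h2 : x ∈ s(ctr B e, lf B e) := by rw [ctr_lf_spec B e]; exact hx
  rw [Sym2.mem_iff] at h2; exact h2

lemma crossE_iff (B : Finset (Sym2 (V × W))) (e : Sym2 (V × W)) :
    crossE e ↔ (ctr B e).1 ≠ (lf B e).1 := by
  rcases ctr_cases B e with ⟨h1, h2⟩ | ⟨h1, h2⟩ <;> rw [h1, h2] <;> simp [crossE, ne_comm]


noncomputable def heightsIn (B : Finset (Sym2 (V × W))) (c : V × W) (j : V) : Finset W :=
  (B.filter (fun f => crossE f ∧ ctr B f = c ∧ (lf B f).1 = j)).image (fun f => (lf B f).2)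

noncomputable def colsOf (B : Finset (Sym2 (V × W))) (c : V × W) : Finset V :=
  (B.filter (fun f => crossE f ∧ ctr B f = c)).image (fun f => (lf B f).1)

noncomputable def maxcol (B : Finset (Sym2 (V × W))) (c : V × W) : V :=
  if h : (colsOf B c).Nonempty then
    ((colsOf B c).exists_max_image (fun j => (heightsIn B c j).card) h).choose
  else c.1

noncomputable def AA (B : Finset (Sym2 (V × W))) (c : V × W) : Finset W :=
  heightsIn B c (maxcol B c)

lemma maxcol_max {B : Finset (Sym2 (V × W))} {c : V × W} {j : V} (h : j ∈ colsOf B c) :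
    (heightsIn B c j).card ≤ (AA B c).card := by
  rw [AA, maxcol, dif_pos ⟨j, h⟩]
  obtain ⟨-, hm⟩ := ((colsOf B c).exists_max_image
    (fun j => (heightsIn B c j).card) ⟨j, h⟩).choose_spec
  exact hm j h

lemma mem_AA {B : Finset (Sym2 (V × W))} {c : V × W} {a : W} (ha : a ∈ AA B c) :
    ∃ e ∈ B, crossE e ∧ ctr B e = c ∧ (lf B e).1 = maxcol B c ∧ (lf B e).2 = a := by
  rw [AA, heightsIn, Finset.mem_image] at ha
  obtain ⟨f, hf, hfa⟩ := ha
  rw [Finset.mem_filter] at hf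
  exact ⟨f, hf.1, hf.2.1, hf.2.2.1, hf.2.2.2, hfa⟩

noncomputable def rk [LinearOrder W] (s : Finset W) (t : W) : ℕ :=
  (s.filter (fun x => x < t)).card

noncomputable def pick [LinearOrder W] (A : Finset W) (k : ℕ) (d : W) : W :=
  if h : k < A.card then A.orderEmbOfFin rfl ⟨k, h⟩ else d

lemma pick_mem [LinearOrder W] {A : Finset W} {k : ℕ} (h : k < A.card) (d : W) :
    pick A k d ∈ A := by
  rw [pick, dif_pos h]; exact A.orderEmbOfFin_mem rfl _

lemma pick_inj [LinearOrder W] {A : Finset W} {k k' : ℕ} (h : k < A.card)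
    (h' : k' < A.card) {d d' : W} (he : pick A k d = pick A k' d') : k = k' := by
  simp only [pick] at he
  rw [dif_pos h, dif_pos h'] at he
  have := (A.orderEmbOfFin rfl).injective he
  exact Fin.mk.injEq k h k' h' ▸ this

lemma rk_lt [LinearOrder W] {s : Finset W} {t : W} (ht : t ∈ s) : rk s t < s.card :=
  Finset.card_lt_card (Finset.filter_ssubset.mpr ⟨t, ht, lt_irrefl t⟩)

lemma rk_lt_rk [LinearOrder W] {s : Finset W} {t t' : W} (ht : t ∈ s) (h : t < t') :
    rk s t < rk s t' := by
  refine Finset.card_lt_card ?_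
  rw [Finset.ssubset_iff_of_subset (fun x hx => Finset.mem_filter.mpr
    ⟨(Finset.mem_filter.mp hx).1, lt_trans (Finset.mem_filter.mp hx).2 h⟩)]
  exact ⟨t, Finset.mem_filter.mpr ⟨ht, h⟩, fun hc => absurd (Finset.mem_filter.mp hc).2 (lt_irrefl t)⟩

lemma rk_inj [LinearOrder W] {s : Finset W} {t t' : W} (ht : t ∈ s) (ht' : t' ∈ s)
    (h : rk s t = rk s t') : t = t' := by
  rcases lt_trichotomy t t' with hlt | heq | hgt
  · exact absurd h (Nat.ne_of_lt (rk_lt_rk ht hlt))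
  · exact heq
  · exact absurd h.symm (Nat.ne_of_lt (rk_lt_rk ht' hgt))

noncomputable def aOf [LinearOrder W] (B : Finset (Sym2 (V × W))) (e : Sym2 (V × W)) : W :=
  pick (AA B (ctr B e)) (rk (heightsIn B (ctr B e) (lf B e).1) (lf B e).2) (lf B e).2

noncomputable def phi [LinearOrder W] (B : Finset (Sym2 (V × W))) (e : Sym2 (V × W)) :
    Sym2 (V × W) :=
  if crossE e then s(((ctr B e).1, aOf B e), ((lf B e).1, aOf B e)) else e

lemma ht_mem {B : Finset (Sym2 (V × W))} {e : Sym2 (V × W)} (he : e ∈ B) (hc : crossE e) :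
    (lf B e).2 ∈ heightsIn B (ctr B e) (lf B e).1 := by
  rw [heightsIn, Finset.mem_image]
  exact ⟨e, Finset.mem_filter.mpr ⟨he, hc, rfl, rfl⟩, rfl⟩

lemma col_mem {B : Finset (Sym2 (V × W))} {e : Sym2 (V × W)} (he : e ∈ B) (hc : crossE e) :
    (lf B e).1 ∈ colsOf B (ctr B e) := by
  rw [colsOf, Finset.mem_image]
  exact ⟨e, Finset.mem_filter.mpr ⟨he, hc, rfl⟩, rfl⟩

lemma rk_lt_AA {B : Finset (Sym2 (V × W))} {e : Sym2 (V × W)} [LinearOrder W]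
    (he : e ∈ B) (hc : crossE e) :
    rk (heightsIn B (ctr B e) (lf B e).1) (lf B e).2 < (AA B (ctr B e)).card :=
  lt_of_lt_of_le (rk_lt (ht_mem he hc)) (maxcol_max (col_mem he hc))

lemma aOf_mem [LinearOrder W] {B : Finset (Sym2 (V × W))} {e : Sym2 (V × W)}
    (he : e ∈ B) (hc : crossE e) : aOf B e ∈ AA B (ctr B e) :=
  pick_mem (rk_lt_AA he hc) _

lemma aOf_inj [LinearOrder W] {B : Finset (Sym2 (V × W))} {e f : Sym2 (V × W)}
    (he : e ∈ B) (hf : f ∈ B) (hce : crossE e) (hcf : crossE f)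
    (hctr : ctr B e = ctr B f) (hcol : (lf B e).1 = (lf B f).1)
    (hA : aOf B e = aOf B f) : e = f := by
  rw [aOf, aOf, ← hctr, ← hcol] at hA
  have hk := pick_inj (rk_lt_AA he hce) (by rw [hctr, hcol] at *; exact rk_lt_AA hf hcf) hA
  have hsnd : (lf B e).2 = (lf B f).2 :=
    rk_inj (ht_mem he hce) (by rw [hctr, hcol] at *; exact ht_mem hf hcf) hk
  have hlf : lf B e = lf B f := Prod.ext hcol hsnd
  rw [← ctr_lf_spec B e, ← ctr_lf_spec B f, hctr, hlf]


section Graphs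
variable {G : SimpleGraph V} {H : SimpleGraph W} {B : Finset (Sym2 (V × W))}

lemma lexAdj {x y : V × W} :
    (lexProd G H).Adj x y ↔ G.Adj x.1 y.1 ∨ (x.1 = y.1 ∧ H.Adj x.2 y.2) := Iff.rfl

lemma strongAdj {x y : V × W} :
    (strongProd G H).Adj x y ↔
      x ≠ y ∧ (x.1 = y.1 ∨ G.Adj x.1 y.1) ∧ (x.2 = y.2 ∨ H.Adj x.2 y.2) := Iff.rfl

lemma strong_le_lex {x y : V × W} (h : (strongProd G H).Adj x y) :
    (lexProd G H).Adj x y := by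
  obtain ⟨hne, h1, h2⟩ := h
  rcases h1 with h1 | h1
  · rcases h2 with h2 | h2
    · exact absurd (Prod.ext h1 h2) hne
    · exact Or.inr ⟨h1, h2⟩
  · exact Or.inl h1

lemma box_le_strong {x y : V × W} (h : (G.boxProd H).Adj x y) :
    (strongProd G H).Adj x y := by
  rw [SimpleGraph.boxProd_adj] at h
  rcases h with ⟨h1, h2⟩ | ⟨h1, h2⟩
  · exact ⟨fun hc => G.loopless.irrefl _ (hc ▸ h1), Or.inr h1, Or.inl h2⟩
  · exact ⟨fun hc => H.loopless.irrefl _ (hc ▸ h1), Or.inl h2, Or.inr h1⟩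

variable (hB : IsEOPSet (lexProd G H) ↑B)
include hB

lemma P1 {e f : Sym2 (V × W)} {x y : V × W} (he : e ∈ B) (hf : f ∈ B)
    (hx : x ∈ e) (hy : y ∈ f) (hadj : (lexProd G H).Adj x y)
    (hxf : x ∉ f) (hye : y ∉ e) : False := by
  have hef : e ≠ f := fun h => hye (h ▸ hy)
  rcases hB.2 e he f hf hef x hx y hy hadj with h | h
  · exact hye (h ▸ Sym2.mem_mk_right x y)
  · exact hxf (h ▸ Sym2.mem_mk_left x y)

lemma edge_adj {e : Sym2 (V × W)} (he : e ∈ B) :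
    (lexProd G H).Adj (ctr B e) (lf B e) := by
  have h := hB.1 (Finset.mem_coe.mpr he)
  rw [← SimpleGraph.mem_edgeSet, ctr_lf_spec B e]
  exact h

lemma shared_eq_ctr {e f : Sym2 (V × W)} {v : V × W} (he : e ∈ B) (hf : f ∈ B)
    (hfe : f ≠ e) (hv : v ∈ e) (hvf : v ∈ f) : ctr B e = v := by
  have hex : ∃ w, w ∈ e ∧ ∃ f' ∈ B, f' ≠ e ∧ w ∈ f' := ⟨v, hv, f, hf, hfe, hvf⟩
  rw [ctr, dif_pos hex]
  obtain ⟨hwe, f', hf', hf'e, hwf'⟩ := hex.choose_spec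
  set w := hex.choose with hw
  by_contra hne
  have hvw : v ≠ w := fun h => hne h.symm
  have hevw : e = s(v, w) := (Sym2.mem_and_mem_iff hvw).mp ⟨hv, hwe⟩
  have hadj : (lexProd G H).Adj v w := by
    have h := hB.1 (Finset.mem_coe.mpr he)
    rw [hevw, SimpleGraph.mem_edgeSet] at h
    exact h
  refine P1 hB hf hf' hvf hwf' hadj (fun hvf' => hf'e ?_) (fun hwf2 => hfe ?_)
  · exact ((Sym2.mem_and_mem_iff hvw).mp ⟨hvf', hwf'⟩).trans hevw.symm
  · exact ((Sym2.mem_and_mem_iff hvw).mp ⟨hvf, hwf2⟩).trans hevw.symm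

lemma shared_ctr_both {e f : Sym2 (V × W)} {v : V × W} (he : e ∈ B) (hf : f ∈ B)
    (hef : e ≠ f) (hv : v ∈ e) (hv' : v ∈ f) : ctr B e = v ∧ ctr B f = v :=
  ⟨shared_eq_ctr hB he hf hef.symm hv hv', shared_eq_ctr hB hf he hef hv' hv⟩

lemma cross_G_adj {e : Sym2 (V × W)} (he : e ∈ B) (hc : crossE e) :
    G.Adj (ctr B e).1 (lf B e).1 := by
  rcases edge_adj hB he with h | ⟨h1, -⟩
  · exact h
  · exact absurd h1 ((crossE_iff B e).mp hc)

omit hB in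
lemma noncross_eq {e : Sym2 (V × W)} (hc : ¬crossE e) :
    (ctr B e).1 = (lf B e).1 := by
  by_contra h; exact hc ((crossE_iff B e).mpr h)

lemma noncross_H_adj {e : Sym2 (V × W)} (he : e ∈ B) (hc : ¬crossE e) :
    H.Adj (ctr B e).2 (lf B e).2 := by
  rcases edge_adj hB he with h | ⟨-, h2⟩
  · exact absurd (crossE_iff B e |>.mpr h.ne) hc
  · exact h2

omit hB in
lemma noncross_col {e : Sym2 (V × W)} {x : V × W} (hc : ¬crossE e) (hx : x ∈ e) :
    x.1 = (ctr B e).1 := by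
  rcases mem_eq (B := B) hx with h | h
  · rw [h]
  · rw [h]; exact (noncross_eq hc).symm

omit hB
lemma ctr_ne_lf {e : Sym2 (V × W)} (hc : crossE e) : ctr B e ≠ lf B e :=
  fun h => (crossE_iff B e).mp hc (congrArg Prod.fst h)
include hB

lemma no_mixed {e f : Sym2 (V × W)} (he : e ∈ B) (hce : crossE e) (hf : f ∈ B)
    (hfe : f ≠ e) (hcf : ctr B f = ctr B e) (hnc : ¬crossE f) : False := by
  have hgne := (crossE_iff B e).mp hce
  have hadj : (lexProd G H).Adj (lf B e) (lf B f) := by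
    refine Or.inl ?_
    have h1 : (lf B f).1 = (ctr B e).1 := by rw [← hcf]; exact (noncross_eq hnc).symm
    rw [h1]
    exact (cross_G_adj hB he hce).symm
  have hcoords : (lf B e).1 ≠ (lf B f).1 := by
    rw [← noncross_eq hnc, hcf]
    exact ((crossE_iff B e).mp hce).symm
  refine P1 hB he hf (lf_mem B e) (lf_mem B f) hadj (fun hef => ?_) (fun hfe2 => ?_)
  · rcases mem_eq (B := B) hef with h | h
    · exact ctr_ne_lf hce ((h.trans hcf).symm)
    · exact hcoords (congrArg Prod.fst h)
  · rcases mem_eq (B := B) hfe2 with h | h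
    · exact ((edge_adj hB hf).ne) (hcf.symm ▸ h.symm ▸ rfl)
    · exact hcoords (congrArg Prod.fst h.symm)

/-- L3a: a vertex of another edge in the centre column of a cross edge must be its centre. -/
lemma L3a {e f : Sym2 (V × W)} {y : V × W} (he : e ∈ B) (hce : crossE e) (hf : f ∈ B)
    (hfe : f ≠ e) (hy : y ∈ f) (hcol : y.1 = (ctr B e).1) :
    y = ctr B e ∧ crossE f ∧ ctr B f = ctr B e := by
  by_cases hyE : y ∈ e
  · have hyc : y = ctr B e := by
      rcases mem_eq (B := B) hyE with h | h
      · exact h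
      · exact absurd (hcol.symm.trans (congrArg Prod.fst h)) ((crossE_iff B e).mp hce)
    have hcf : ctr B f = ctr B e :=
      shared_eq_ctr hB hf he hfe.symm (hyc ▸ hy) (ctr_mem B e)
    refine ⟨hyc, ?_, hcf⟩
    by_contra hnc
    exact no_mixed hB he hce hf hfe hcf hnc
  · exfalso
    have hadj : (lexProd G H).Adj (lf B e) y :=
      Or.inl (by rw [hcol]; exact (cross_G_adj hB he hce).symm)
    refine P1 hB he hf (lf_mem B e) hy hadj (fun hlf => ?_) hyE
    exact ctr_ne_lf hce (shared_eq_ctr hB he hf hfe (lf_mem B e) hlf)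

/-- L3b: a vertex of another edge in the leaf column of a cross edge forces same star. -/
lemma L3b {e f : Sym2 (V × W)} {y : V × W} (he : e ∈ B) (hce : crossE e) (hf : f ∈ B)
    (hfe : f ≠ e) (hy : y ∈ f) (hcol : y.1 = (lf B e).1) :
    crossE f ∧ ctr B f = ctr B e ∧ y = lf B f := by
  have hyE : y ∉ e := by
    intro h
    rcases mem_eq (B := B) h with h1 | h1
    · exact (crossE_iff B e).mp hce ((congrArg Prod.fst h1).symm.trans hcol)
    · exact ctr_ne_lf hce (h1 ▸ shared_eq_ctr hB he hf hfe h hy)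
  have hcfmem : ctr B e ∈ f := by
    by_contra hcf
    have hadj : (lexProd G H).Adj (ctr B e) y :=
      Or.inl (by rw [hcol]; exact cross_G_adj hB he hce)
    exact P1 hB he hf (ctr_mem B e) hy hadj hcf hyE
  have hcf : ctr B f = ctr B e :=
    shared_eq_ctr hB hf he hfe.symm hcfmem (ctr_mem B e)
  have hcrf : crossE f := by
    by_contra hnc
    exact no_mixed hB he hce hf hfe hcf hnc
  refine ⟨hcrf, hcf, ?_⟩
  rcases mem_eq (B := B) hy with h | h
  · exfalso
    rw [h, hcf] at hcol
    exact (crossE_iff B e).mp hce hcol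
  · exact h

/-- L1: two distinct edges in the same star have distinct, non-adjacent leaves. -/
lemma L1 {e f : Sym2 (V × W)} (he : e ∈ B) (hf : f ∈ B) (hef : e ≠ f)
    (hce : crossE e) (hcf : crossE f) (hctr : ctr B f = ctr B e) :
    lf B e ≠ lf B f ∧ ¬ (lexProd G H).Adj (lf B e) (lf B f) := by
  constructor
  · intro h
    apply hef
    rw [← ctr_lf_spec B e, ← ctr_lf_spec B f, hctr, h]
  · intro hadj
    refine P1 hB he hf (lf_mem B e) (lf_mem B f) hadj (fun hlf => ?_) (fun hlf => ?_)
    · exact ctr_ne_lf hce (shared_eq_ctr hB he hf hef.symm (lf_mem B e) hlf)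
    · exact ctr_ne_lf hcf (shared_eq_ctr hB hf he hef (lf_mem B f) hlf)

/-- Different stars: supports do not share a vertex. -/
lemma diff_ctr_not_shared {e f : Sym2 (V × W)} (he : e ∈ B) (hf : f ∈ B)
    (hctr : ctr B e ≠ ctr B f) {v : V × W} (hv : v ∈ e) : v ∉ f := by
  intro hvf
  have hef : e ≠ f := fun h => hctr (h ▸ rfl)
  obtain ⟨h1, h2⟩ := shared_ctr_both hB he hf hef hv hvf
  exact hctr (h1.trans h2.symm)

/-- Different stars of cross edges: columns are distinct and non-adjacent. -/
lemma diff_star {e f : Sym2 (V × W)} (he : e ∈ B) (hf : f ∈ B)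
    (hce : crossE e) (hcf : crossE f) (hctr : ctr B e ≠ ctr B f)
    {x y : V × W} (hx : x ∈ e) (hy : y ∈ f) :
    x.1 ≠ y.1 ∧ ¬ G.Adj x.1 y.1 := by
  have hef : e ≠ f := fun h => hctr (h ▸ rfl)
  constructor
  · intro hcol
    rcases mem_eq (B := B) hx with h | h
    · obtain ⟨-, -, h3⟩ := L3a hB he hce hf hef.symm hy (hcol.symm.trans (congrArg Prod.fst h))
      exact hctr h3.symm
    · obtain ⟨-, h3, -⟩ := L3b hB he hce hf hef.symm hy (hcol.symm.trans (congrArg Prod.fst h))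
      exact hctr h3.symm
  · intro hadj
    exact P1 hB he hf hx hy (Or.inl hadj)
      (diff_ctr_not_shared hB he hf hctr hx)
      (diff_ctr_not_shared hB hf he hctr.symm hy)

/-- Mixed: a non-cross edge and a cross edge live in fully non-adjacent columns. -/
lemma mixed_cols {e f : Sym2 (V × W)} (he : e ∈ B) (hnce : ¬crossE e)
    (hf : f ∈ B) (hcf : crossE f) {x y : V × W} (hx : x ∈ e) (hy : y ∈ f) :
    x.1 ≠ y.1 ∧ ¬ G.Adj x.1 y.1 := by
  have hef : e ≠ f := fun h => hnce (h ▸ hcf)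
  have hne : x.1 ≠ y.1 := by
    intro hcol
    rcases mem_eq (B := B) hy with h | h
    · obtain ⟨-, hcre, -⟩ := L3a hB hf hcf he hef hx (hcol.trans (congrArg Prod.fst h))
      exact hnce hcre
    · obtain ⟨hcre, -, -⟩ := L3b hB hf hcf he hef hx (hcol.trans (congrArg Prod.fst h))
      exact hnce hcre
  refine ⟨hne, fun hadj => ?_⟩
  have hxf : x ∉ f := by
    intro hxf
    obtain ⟨h1, h2⟩ := shared_ctr_both hB he hf hef hx hxf
    -- the other vertex of e is also in column x.1 = (ctr B f).1
    have hother : lf B e ∈ e := lf_mem B e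
    have hoc : (lf B e).1 = (ctr B f).1 := by
      rw [h2]
      exact (noncross_col (B := B) hnce hother).trans (noncross_col (B := B) hnce hx).symm
    by_cases hle : lf B e = x
    · -- then e is a loop-free edge with ctr B e = x as well: both endpoints equal x
      have := (edge_adj hB he).ne
      rw [h1, ← hle] at this
      exact this rfl
    · obtain ⟨hy2, -, -⟩ := L3a hB hf hcf he hef hother hoc
      exact hle (hy2.trans h2)
  have hye : y ∉ e := by
    intro hye
    exact hne ((noncross_col (B := B) hnce hx).trans (noncross_col (B := B) hnce hye).symm)
  exact P1 hB he hf hx hy (Or.inl hadj) hxf hye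

/-- Heights in the reference column of a star form an independent set of `H`. -/
lemma AA_indep (c : V × W) {a b : W} (ha : a ∈ AA B c) (hb : b ∈ AA B c)
    (hab : a ≠ b) : ¬ H.Adj a b := by
  obtain ⟨e, he, hce, hctre, hcole, hhte⟩ := mem_AA ha
  obtain ⟨f, hf, hcf, hctrf, hcolf, hhtf⟩ := mem_AA hb
  have hef : e ≠ f := by
    intro h
    exact hab (hhte.symm.trans (h ▸ hhtf))
  intro hadj
  obtain ⟨-, hna⟩ := L1 hB he hf hef hce hcf (hctrf.trans hctre.symm)
  exact hna (Or.inr ⟨hcole.trans hcolf.symm, by rw [hhte, hhtf]; exact hadj⟩)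

end Graphs

lemma pair_eq {X Y : Type*} {a a' : X} {b b' : Y} (h1 : a = a') (h2 : b = b') :
    (a, b) = (a', b') := by rw [h1, h2]

lemma key {V W : Type*} [Fintype W] (G : SimpleGraph V) (H : SimpleGraph W)
    (B : Finset (Sym2 (V × W))) (hB : IsEOPSet (lexProd G H) ↑B) :
    ∃ B' : Finset (Sym2 (V × W)), IsEOPSet (strongProd G H) ↑B' ∧
      IsEOPSet (G.boxProd H) ↑B' ∧ B'.card = B.card := by
  letI : LinearOrder W :=
    LinearOrder.lift' (Fintype.equivFin W) (Fintype.equivFin W).injective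
  have hphiC : ∀ e, crossE e →
      phi B e = s(((ctr B e).1, aOf B e), ((lf B e).1, aOf B e)) := fun e h => if_pos h
  have hphiN : ∀ e, ¬crossE e → phi B e = e := fun e h => if_neg h
  -- each image edge is an edge of the Cartesian product
  have hedge : ∀ e ∈ B, phi B e ∈ (G.boxProd H).edgeSet := by
    intro e he
    by_cases hc : crossE e
    · rw [hphiC e hc, SimpleGraph.mem_edgeSet, SimpleGraph.boxProd_adj]
      exact Or.inl ⟨cross_G_adj hB he hc, rfl⟩
    · have h2 : s(ctr B e, lf B e) ∈ (G.boxProd H).edgeSet := by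
        rw [SimpleGraph.mem_edgeSet, SimpleGraph.boxProd_adj]
        exact Or.inr ⟨noncross_H_adj hB he hc, noncross_eq hc⟩
      rw [hphiN e hc, ← ctr_lf_spec B e]
      exact h2
  -- the key pairwise property, with respect to the strong product
  have hmain : ∀ e ∈ B, ∀ f ∈ B, phi B e ≠ phi B f →
      ∀ x ∈ phi B e, ∀ y ∈ phi B f, (strongProd G H).Adj x y →
        s(x, y) = phi B e ∨ s(x, y) = phi B f := by
    intro e he f hf hnepq x hx y hy hadj
    by_cases hce : crossE e <;> by_cases hcf : crossE f
    · -- both cross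
      rw [hphiC e hce, Sym2.mem_iff] at hx
      rw [hphiC f hcf, Sym2.mem_iff] at hy
      by_cases hctr : ctr B e = ctr B f
      · -- same star
        have hef : e ≠ f := fun h => hnepq (h ▸ rfl)
        have ha : aOf B e ∈ AA B (ctr B e) := aOf_mem he hce
        have hb : aOf B f ∈ AA B (ctr B e) := by rw [hctr]; exact aOf_mem hf hcf
        have hindep : aOf B e ≠ aOf B f → ¬ H.Adj (aOf B e) (aOf B f) :=
          fun hne => AA_indep hB (ctr B e) ha hb hne
        obtain ⟨hne', h1, h2⟩ := hadj
        rcases hx with hx | hx <;> rcases hy with hy | hy <;> subst hx <;> subst hy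
        · -- centre vs centre
          exfalso
          by_cases hab : aOf B e = aOf B f
          · exact hne' (pair_eq (congrArg Prod.fst hctr) hab)
          · rcases h2 with h2 | h2
            · exact hab h2
            · exact hindep hab h2
        · -- centre of e vs leaf of f : the connecting edge is phi f
          have hab : aOf B e = aOf B f := by
            rcases h2 with h2 | h2
            · exact h2
            · by_contra hab; exact hindep hab h2
          right
          rw [hphiC f hcf]
          have hxy : ((ctr B e).1, aOf B e) = ((ctr B f).1, aOf B f) :=
            pair_eq (congrArg Prod.fst hctr) hab
          rw [hxy]
        · -- leaf of e vs centre of f : the connecting edge is phi e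
          have hab : aOf B e = aOf B f := by
            rcases h2 with h2 | h2
            · exact h2
            · by_contra hab; exact hindep hab h2
          left
          rw [hphiC e hce, Sym2.eq_swap]
          have hxy : ((ctr B f).1, aOf B f) = ((ctr B e).1, aOf B e) :=
            (pair_eq (congrArg Prod.fst hctr) hab).symm
          rw [hxy]
        · -- leaf vs leaf
          exfalso
          obtain ⟨hlfne, hlfnadj⟩ := L1 hB he hf hef hce hcf hctr.symm
          rcases h1 with h1 | h1
          · -- same leaf column
            have hab : aOf B e ≠ aOf B f := by
              intro hab
              exact hef (aOf_inj he hf hce hcf hctr h1 hab)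
            rcases h2 with h2 | h2
            · exact hab h2
            · exact hindep hab h2
          · exact hlfnadj (Or.inl h1)
      · -- different stars: no adjacency at all
        exfalso
        have hstep : ∀ x' ∈ e, x'.1 = x.1 → ∀ y' ∈ f, y'.1 = y.1 → False := by
          intro x' hx' hcx y' hy' hcy
          obtain ⟨hne1, hnadj⟩ := diff_star hB he hf hce hcf hctr hx' hy'
          rcases hadj.2.1 with h1 | h1
          · exact hne1 (hcx.trans (h1.trans hcy.symm))
          · exact hnadj (by rw [hcx, hcy]; exact h1)
        rcases hx with hx | hx <;> rcases hy with hy | hy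
        · exact hstep _ (ctr_mem B e) (by rw [hx]) _ (ctr_mem B f) (by rw [hy])
        · exact hstep _ (ctr_mem B e) (by rw [hx]) _ (lf_mem B f) (by rw [hy])
        · exact hstep _ (lf_mem B e) (by rw [hx]) _ (ctr_mem B f) (by rw [hy])
        · exact hstep _ (lf_mem B e) (by rw [hx]) _ (lf_mem B f) (by rw [hy])
    · -- e cross, f non-cross
      exfalso
      rw [hphiC e hce, Sym2.mem_iff] at hx
      rw [hphiN f hcf] at hy
      have hstep : ∀ x' ∈ e, x'.1 = x.1 → False := by
        intro x' hx' hcol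
        obtain ⟨hne1, hnadj⟩ := mixed_cols hB hf hcf he hce hy hx'
        rcases hadj.2.1 with h1 | h1
        · exact hne1 (h1.symm.trans hcol.symm)
        · exact hnadj (by rw [hcol]; exact h1.symm)
      rcases hx with hx | hx
      · exact hstep _ (ctr_mem B e) (by rw [hx])
      · exact hstep _ (lf_mem B e) (by rw [hx])
    · -- e non-cross, f cross
      exfalso
      rw [hphiC f hcf, Sym2.mem_iff] at hy
      rw [hphiN e hce] at hx
      have hstep : ∀ y' ∈ f, y'.1 = y.1 → False := by
        intro y' hy' hcol
        obtain ⟨hne1, hnadj⟩ := mixed_cols hB he hce hf hcf hx hy'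
        rcases hadj.2.1 with h1 | h1
        · exact hne1 (h1.trans hcol.symm)
        · exact hnadj (by rw [hcol]; exact h1)
      rcases hy with hy | hy
      · exact hstep _ (ctr_mem B f) (by rw [hy])
      · exact hstep _ (lf_mem B f) (by rw [hy])
    · -- both non-cross
      rw [hphiN e hce] at hx ⊢
      rw [hphiN f hcf] at hy ⊢
      have hef : e ≠ f := by
        intro h; exact hnepq (h ▸ rfl)
      exact hB.2 e (Finset.mem_coe.mpr he) f (Finset.mem_coe.mpr hf) hef x hx y hy
        (strong_le_lex hadj)
  -- injectivity
  have hinj : Set.InjOn (phi B) ↑B := by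
    intro e he' f hf' hphieq
    have he : e ∈ B := Finset.mem_coe.mp he'
    have hf : f ∈ B := Finset.mem_coe.mp hf'
    by_cases hce : crossE e <;> by_cases hcf : crossE f
    · by_cases hctr : ctr B e = ctr B f
      · rw [hphiC e hce, hphiC f hcf, Sym2.eq_iff] at hphieq
        rcases hphieq with ⟨h1, h2⟩ | ⟨h1, h2⟩
        · exact aOf_inj he hf hce hcf hctr (Prod.ext_iff.mp h2).1 (Prod.ext_iff.mp h2).2
        · exfalso
          apply (crossE_iff B f).mp hcf
          exact ((congrArg Prod.fst hctr).symm.trans (Prod.ext_iff.mp h1).1)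
      · exfalso
        have hmem : ((ctr B e).1, aOf B e) ∈ phi B f := by
          rw [← hphieq, hphiC e hce]
          exact Sym2.mem_mk_left _ _
        rw [hphiC f hcf, Sym2.mem_iff] at hmem
        rcases hmem with h | h
        · exact (diff_star hB he hf hce hcf hctr (ctr_mem B e) (ctr_mem B f)).1
            (Prod.ext_iff.mp h).1
        · exact (diff_star hB he hf hce hcf hctr (ctr_mem B e) (lf_mem B f)).1
            (Prod.ext_iff.mp h).1
    · exfalso
      have hmem : ((ctr B e).1, aOf B e) ∈ f := by
        rw [← hphiN f hcf, ← hphieq, hphiC e hce]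
        exact Sym2.mem_mk_left _ _
      exact (mixed_cols hB hf hcf he hce hmem (ctr_mem B e)).1 rfl
    · exfalso
      have hmem : ((ctr B f).1, aOf B f) ∈ e := by
        rw [← hphiN e hce, hphieq, hphiC f hcf]
        exact Sym2.mem_mk_left _ _
      exact (mixed_cols hB he hce hf hcf hmem (ctr_mem B f)).1 rfl
    · rw [hphiN e hce, hphiN f hcf] at hphieq
      exact hphieq
  refine ⟨B.image (phi B), ⟨?_, ?_⟩, ⟨?_, ?_⟩, ?_⟩
  · -- subset of strong edges
    intro e' he'
    obtain ⟨e, he, rfl⟩ := Finset.mem_image.mp (Finset.mem_coe.mp he')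
    exact SimpleGraph.edgeSet_mono (fun x y h => box_le_strong h) (hedge e he)
  · rintro e₁ he₁ e₂ he₂ hne x hx y hy hadj
    obtain ⟨e, he, rfl⟩ := Finset.mem_image.mp (Finset.mem_coe.mp he₁)
    obtain ⟨f, hf, rfl⟩ := Finset.mem_image.mp (Finset.mem_coe.mp he₂)
    exact hmain e he f hf hne x hx y hy hadj
  · intro e' he'
    obtain ⟨e, he, rfl⟩ := Finset.mem_image.mp (Finset.mem_coe.mp he')
    exact hedge e he
  · rintro e₁ he₁ e₂ he₂ hne x hx y hy hadj
    obtain ⟨e, he, rfl⟩ := Finset.mem_image.mp (Finset.mem_coe.mp he₁)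
    obtain ⟨f, hf, rfl⟩ := Finset.mem_image.mp (Finset.mem_coe.mp he₂)
    exact hmain e he f hf hne x hx y hy (box_le_strong hadj)
  · exact Finset.card_image_of_injOn hinj

end EOPAux



/-- For arbitrary graphs `G` and `H`, `ρₑᵒ(G ∘ H) ≤ min{ρₑᵒ(G ⊠ H), ρₑᵒ(G □ H)}`. -/
theorem stmt_13 {V W : Type*} [Fintype V] [Fintype W]
    (G : SimpleGraph V) (H : SimpleGraph W) :
    eopNum (lexProd G H) ≤ min (eopNum (strongProd G H)) (eopNum (G.boxProd H)) := by
  classical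
  have hbdd : ∀ K : SimpleGraph (V × W),
      BddAbove {n | ∃ B : Finset (Sym2 (V × W)), IsEOPSet K ↑B ∧ B.card = n} := by
    intro K
    refine ⟨Fintype.card (Sym2 (V × W)), ?_⟩
    rintro n ⟨B, -, rfl⟩
    exact Finset.card_le_univ B
  have hne0 : ∀ K : SimpleGraph (V × W),
      (0 : ℕ) ∈ {n | ∃ B : Finset (Sym2 (V × W)), IsEOPSet K ↑B ∧ B.card = n} := by
    intro K
    refine ⟨∅, ⟨?_, ?_⟩, by simp⟩
    · simp
    · simp
  rw [eopNum]
  refine le_min ?_ ?_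
  · refine csSup_le ⟨0, hne0 _⟩ ?_
    rintro n ⟨B, hB, rfl⟩
    obtain ⟨B', h1, h2, hc⟩ := EOPAux.key G H B hB
    rw [eopNum]
    exact le_csSup (hbdd _) ⟨B', h1, hc⟩
  · refine csSup_le ⟨0, hne0 _⟩ ?_
    rintro n ⟨B, hB, rfl⟩
    obtain ⟨B', h1, h2, hc⟩ := EOPAux.key G H B hB
    rw [eopNum]
    exact le_csSup (hbdd _) ⟨B', h2, hc⟩
end

section
/- If G is a bipartite graph, then ρ_e^o(G) ≥ δ(G)·ρ_3(G), where ρ_3(G) is the maximum size of a set of vertices pairwise at distance greater than 3. -/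
open SimpleGraph

/-- If `G` is bipartite, then `ρₑᵒ(G) ≥ δ(G)·ρ₃(G)`. -/
theorem stmt_16 {V : Type*} [Fintype V] (G : SimpleGraph V)
    (hbip : ∃ c : V → Bool, ∀ x y, G.Adj x y → c x ≠ c y) :
    minDeg G * threePackNum G ≤ eopNum G := by

  classical
  obtain ⟨c, hc⟩ := hbip
  -- extract a maximum 3-packing
  have hne : ({n | ∃ P : Finset V,
      (∀ x ∈ P, ∀ y ∈ P, x ≠ y →
        ¬ G.Adj x y ∧ (∀ z, ¬ (G.Adj x z ∧ G.Adj z y)) ∧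
        (∀ z w, ¬ (G.Adj x z ∧ G.Adj z w ∧ G.Adj w y))) ∧ P.card = n} : Set ℕ).Nonempty :=
    ⟨0, ∅, by simp, by simp⟩
  have hbdd : BddAbove {n | ∃ P : Finset V,
      (∀ x ∈ P, ∀ y ∈ P, x ≠ y →
        ¬ G.Adj x y ∧ (∀ z, ¬ (G.Adj x z ∧ G.Adj z y)) ∧
        (∀ z w, ¬ (G.Adj x z ∧ G.Adj z w ∧ G.Adj w y))) ∧ P.card = n} :=
    ⟨Fintype.card V, by rintro n ⟨P, -, rfl⟩; exact P.card_le_univ⟩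
  have hmem : threePackNum G ∈ {n | ∃ P : Finset V,
      (∀ x ∈ P, ∀ y ∈ P, x ≠ y →
        ¬ G.Adj x y ∧ (∀ z, ¬ (G.Adj x z ∧ G.Adj z y)) ∧
        (∀ z w, ¬ (G.Adj x z ∧ G.Adj z w ∧ G.Adj w y))) ∧ P.card = n} :=
    Nat.sSup_mem hne hbdd
  obtain ⟨P, hP, hPcard⟩ := hmem
  -- min degree bound
  have hdeg : ∀ v : V, minDeg G ≤ G.degree v := by
    intro v
    have h1 : (G.neighborSet v).ncard ∈ {d | ∃ v, d = (G.neighborSet v).ncard} := ⟨v, rfl⟩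
    have h2 := Nat.sInf_le h1
    have h3 : (G.neighborSet v).ncard = G.degree v := by
      rw [Set.ncard_eq_toFinset_card']
      simp [SimpleGraph.neighborFinset, SimpleGraph.degree]
    rw [h3] at h2
    exact h2
  -- choose minDeg G neighbors of each vertex
  have hex : ∀ v : V, ∃ N ⊆ G.neighborFinset v, N.card = minDeg G := fun v =>
    Finset.exists_subset_card_eq (hdeg v)
  choose N hNsub hNcard using hex
  have hNadj : ∀ v, ∀ a ∈ N v, G.Adj v a := fun v a ha =>
    (G.mem_neighborFinset v a).1 (hNsub v ha)
  set B : Finset (Sym2 V) := P.biUnion (fun v => (N v).image (fun a => s(v, a))) with hB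
  -- membership decomposition
  have hBmem : ∀ e ∈ B, ∃ v ∈ P, ∃ a ∈ N v, e = s(v, a) := by
    intro e he
    rw [hB, Finset.mem_biUnion] at he
    obtain ⟨v, hv, he⟩ := he
    rw [Finset.mem_image] at he
    obtain ⟨a, ha, rfl⟩ := he
    exact ⟨v, hv, a, ha, rfl⟩
  -- cardinality
  have hcard : B.card = minDeg G * threePackNum G := by
    rw [hB, Finset.card_biUnion]
    · rw [Finset.sum_congr rfl (fun v hv => ?_), Finset.sum_const, hPcard,
        smul_eq_mul, mul_comm]
      rw [Finset.card_image_of_injOn, hNcard]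
      intro a ha b hb hab
      rw [Sym2.eq_iff] at hab
      rcases hab with ⟨-, h⟩ | ⟨h1, h2⟩
      · exact h
      · subst h1; subst h2; rfl
    · intro v hv w hw hvw
      rw [Function.onFun, Finset.disjoint_left]
      intro e hev hew
      rw [Finset.mem_image] at hev hew
      obtain ⟨a, ha, rfl⟩ := hev
      obtain ⟨b, hb, hba⟩ := hew
      rw [Sym2.eq_iff] at hba
      rcases hba with ⟨h1, -⟩ | ⟨h2, -⟩
      · exact hvw h1.symm
      · exact (hP v hv w hw hvw).1 (by rw [h2]; exact hNadj v a ha)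
  -- EOP property
  have hEOP : IsEOPSet G ↑B := by
    constructor
    · intro e he
      obtain ⟨v, hv, a, ha, rfl⟩ := hBmem e (by exact_mod_cast he)
      exact (hNadj v a ha)
    · intro e₁ he₁ e₂ he₂ hne12 x hx y hy hxy
      obtain ⟨v, hv, a, ha, rfl⟩ := hBmem e₁ (by exact_mod_cast he₁)
      obtain ⟨w, hw, b, hb, rfl⟩ := hBmem e₂ (by exact_mod_cast he₂)
      have hva := hNadj v a ha
      have hwb := hNadj w b hb
      rw [Sym2.mem_iff] at hx hy
      by_cases hvw : v = w
      · subst hvw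
        rcases hx with hx | hx <;> rcases hy with hy | hy <;> rw [hx, hy] at hxy ⊢
        · exact absurd hxy G.irrefl
        · exact Or.inr rfl
        · exact Or.inl Sym2.eq_swap
        · -- a adjacent b, both neighbors of v: odd cycle, contradiction with bipartite
          exfalso
          have h1 := hc v a hva
          have h2 := hc v b hwb
          apply hc a b hxy
          revert h1 h2
          cases c v <;> cases c a <;> cases c b <;> decide
      · exfalso
        obtain ⟨h1, h2, h3⟩ := hP v hv w hw hvw
        rcases hx with hx | hx <;> rcases hy with hy | hy <;> rw [hx, hy] at hxy
        · exact h1 hxy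
        · exact h2 b ⟨hxy, hwb.symm⟩
        · exact h2 a ⟨hva, hxy⟩
        · exact h3 a b ⟨hva, hxy, hwb.symm⟩
  -- conclude
  rw [← hcard]
  apply le_csSup
  · exact ⟨Fintype.card (Sym2 V), by rintro n ⟨B', -, rfl⟩; exact B'.card_le_univ⟩
  · exact ⟨B, hEOP, rfl⟩
end

section
/- If n = 2^k for some k ≥ 1, then the edge open packing number of the n-dimensional hypercube satisfies ρ_e^o(Q_n) = 2^{n−1}. -/
open SimpleGraph

namespace Stmt18Aux

open Finset Function

/-! ### Upper bound: any EOP set injects into an independent set -/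

lemma eop_card_le_indep {V : Type*} [DecidableEq V] (G : SimpleGraph V) (B : Finset (Sym2 V))
    (hB : IsEOPSet G ↑B) :
    ∃ S : Finset V, (∀ x ∈ S, ∀ y ∈ S, ¬ G.Adj x y) ∧ S.card = B.card := by
  classical
  have claim : ∀ e, e ∈ B → ∃ x, x ∈ e ∧ ∀ e' ∈ B, e' ≠ e → x ∉ e' := by
    intro e
    induction e using Sym2.ind with
    | _ a b =>
      intro he
      have hab : G.Adj a b := (G.mem_edgeSet).mp (hB.1 he)
      by_contra hcon
      push_neg at hcon
      obtain ⟨e₁, he₁, hne₁, ha⟩ := hcon a (Sym2.mem_mk_left a b)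
      obtain ⟨e₃, he₃, hne₃, hb⟩ := hcon b (Sym2.mem_mk_right a b)
      by_cases h13 : e₁ = e₃
      · subst h13
        exact hne₁ ((Sym2.mem_and_mem_iff hab.ne).mp ⟨ha, hb⟩)
      · rcases hB.2 e₁ he₁ e₃ he₃ h13 a ha b hb hab with h | h
        · exact hne₁ h.symm
        · exact hne₃ h.symm
  choose f hf₁ hf₂ using claim
  have hinj : Function.Injective (fun e : {x // x ∈ B} => f e.1 e.2) := by
    intro e e' heq
    by_contra hne
    have hne' : e'.1 ≠ e.1 := fun h => hne (Subtype.ext h.symm)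
    have heq' : f e.1 e.2 = f e'.1 e'.2 := heq
    have hmem : f e.1 e.2 ∈ e'.1 := by
      rw [heq']; exact hf₁ e'.1 e'.2
    exact hf₂ e.1 e.2 e'.1 e'.2 hne' hmem
  refine ⟨B.attach.image (fun e => f e.1 e.2), ?_, ?_⟩
  · intro x hx y hy hadj
    simp only [mem_image, mem_attach, true_and, Subtype.exists] at hx hy
    obtain ⟨e₁, he₁, rfl⟩ := hx
    obtain ⟨e₂, he₂, rfl⟩ := hy
    by_cases h12 : e₁ = e₂
    · subst h12
      exact G.irrefl hadj
    · rcases hB.2 e₁ he₁ e₂ he₂ h12 _ (hf₁ e₁ he₁) _ (hf₁ e₂ he₂) hadj with h | h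
      · have hmem : f e₂ he₂ ∈ e₁ := by
          rw [← h]; exact Sym2.mem_mk_right _ _
        exact hf₂ e₂ he₂ e₁ he₁ h12 hmem
      · have hmem : f e₁ he₁ ∈ e₂ := by
          rw [← h]; exact Sym2.mem_mk_left _ _
        exact hf₂ e₁ he₁ e₂ he₂ (fun hh => h12 hh.symm) hmem
  · rw [Finset.card_image_of_injective _ hinj, Finset.card_attach]

/-! ### Hypercube adjacency via Hamming distance -/

lemma hyp_adj {n : ℕ} {x y : Fin n → Bool} :
    (hypercube n).Adj x y ↔ hammingDist x y = 1 := by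
  have hdd : hammingDist x y = (Finset.univ.filter (fun i => x i ≠ y i)).card := rfl
  rw [hypercube, SimpleGraph.fromRel_adj]
  constructor
  · rintro ⟨hne, h | h⟩
    · rw [hdd]; exact h
    · rw [hammingDist_comm]; exact h
  · intro h
    refine ⟨?_, Or.inl (by rw [← hdd]; exact h)⟩
    intro hxy
    subst hxy
    rw [hammingDist_self x] at h
    exact one_ne_zero h.symm

/-! ### flips -/

def flip {n : ℕ} (i : Fin n) (v : Fin n → Bool) : Fin n → Bool :=
  Function.update v i (!(v i))

lemma flip_apply_self {n : ℕ} (i : Fin n) (v : Fin n → Bool) : flip i v i = !(v i) :=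
  Function.update_self i _ v

lemma flip_apply_ne {n : ℕ} {i j : Fin n} (h : j ≠ i) (v : Fin n → Bool) :
    flip i v j = v j :=
  Function.update_of_ne h _ v

lemma flip_ne {n : ℕ} (i : Fin n) (v : Fin n → Bool) : flip i v ≠ v := by
  intro h
  have := congrFun h i
  rw [flip_apply_self] at this
  exact (Bool.not_ne_self (v i)) this

lemma flip_flip {n : ℕ} (i : Fin n) (v : Fin n → Bool) : flip i (flip i v) = v := by
  funext j
  by_cases h : j = i
  · subst h
    rw [flip_apply_self, flip_apply_self, Bool.not_not]
  · rw [flip_apply_ne h, flip_apply_ne h]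

lemma dist_flip {n : ℕ} (i : Fin n) (v : Fin n → Bool) :
    hammingDist v (flip i v) = 1 := by
  have : (Finset.univ.filter (fun j => v j ≠ flip i v j)) = {i} := by
    ext j
    simp only [Finset.mem_filter, Finset.mem_univ, true_and, Finset.mem_singleton]
    by_cases h : j = i
    · subst h
      simp [flip_apply_self]
    · simp [flip_apply_ne h, h]
  show (Finset.univ.filter (fun j => v j ≠ flip i v j)).card = 1
  rw [this, Finset.card_singleton]

lemma dist_flip_flip {n : ℕ} {i j : Fin n} (h : i ≠ j) (v : Fin n → Bool) :
    1 < hammingDist (flip i v) (flip j v) := by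
  apply Finset.one_lt_card.mpr
  refine ⟨i, Finset.mem_filter.mpr ⟨Finset.mem_univ _, ?_⟩,
    j, Finset.mem_filter.mpr ⟨Finset.mem_univ _, ?_⟩, h⟩
  · have h1 : flip i v i = !(v i) := flip_apply_self i v
    have h2 : flip j v i = v i := flip_apply_ne h v
    rw [h1, h2]
    exact Bool.not_ne_self (v i)
  · have h1 : flip i v j = v j := flip_apply_ne (Ne.symm h) v
    have h2 : flip j v j = !(v j) := flip_apply_self j v
    rw [h1, h2]
    exact fun hh => Bool.not_ne_self (v j) hh.symm

/-! ### Independent sets in the hypercube -/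

lemma indep_bound {n : ℕ} (hn : 1 ≤ n) (S : Finset (Fin n → Bool))
    (hS : ∀ x ∈ S, ∀ y ∈ S, ¬ (hypercube n).Adj x y) : S.card ≤ 2 ^ (n - 1) := by
  classical
  set i0 : Fin n := ⟨0, hn⟩ with hi0
  have hinj : Function.Injective (flip i0) := by
    intro v w h
    have h2 : flip i0 (flip i0 v) = flip i0 (flip i0 w) := by rw [h]
    rwa [flip_flip, flip_flip] at h2
  have hdisj : Disjoint S (S.image (flip i0)) := by
    rw [Finset.disjoint_left]
    intro a haS haI
    obtain ⟨v, hv, rfl⟩ := Finset.mem_image.mp haI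
    exact hS v hv (flip i0 v) haS (hyp_adj.mpr (dist_flip i0 v))
  have hcu := Finset.card_union_of_disjoint hdisj
  have hle : (S ∪ S.image (flip i0)).card ≤ 2 ^ n := by
    calc (S ∪ S.image (flip i0)).card ≤ (Finset.univ : Finset (Fin n → Bool)).card :=
          Finset.card_le_card (Finset.subset_univ _)
    _ = 2 ^ n := by
          rw [Finset.card_univ, Fintype.card_fun, Fintype.card_bool, Fintype.card_fin]
  rw [Finset.card_image_of_injective _ hinj] at hcu
  have hpow : 2 ^ n = 2 * 2 ^ (n - 1) := by
    rw [← pow_succ']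
    congr 1
    omega
  omega

end Stmt18Aux
namespace Stmt18Aux

open Finset Function

/-! ### The extended Hamming code over `ZMod 2` -/

noncomputable def idxE (k : ℕ) : Fin (2 ^ k) ≃ (Fin k → ZMod 2) :=
  (Fintype.equivFinOfCardEq (by
    rw [Fintype.card_fun, ZMod.card, Fintype.card_fin])).symm

noncomputable def phi (k : ℕ) (x : Fin (2 ^ k) → ZMod 2) : ZMod 2 × (Fin k → ZMod 2) :=
  (∑ p, x p, ∑ p, x p • idxE k p)

lemma phi_add (k : ℕ) (x y : Fin (2 ^ k) → ZMod 2) :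
    phi k (x + y) = phi k x + phi k y := by
  simp only [phi, Pi.add_apply, add_smul, Finset.sum_add_distrib, Prod.mk_add_mk]

lemma phi_sub (k : ℕ) (x y : Fin (2 ^ k) → ZMod 2) :
    phi k (x - y) = phi k x - phi k y := by
  simp only [phi, Pi.sub_apply, sub_smul, Finset.sum_sub_distrib, Prod.mk_sub_mk]

lemma phi_single (k : ℕ) (p : Fin (2 ^ k)) :
    phi k (Pi.single p 1) = (1, idxE k p) := by
  have h1 : (∑ q : Fin (2 ^ k), (Pi.single p (1 : ZMod 2) : Fin (2 ^ k) → ZMod 2) q) = 1 := by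
    rw [Finset.sum_pi_single']
    simp
  have h2 : (∑ q : Fin (2 ^ k), (Pi.single p (1 : ZMod 2) : Fin (2 ^ k) → ZMod 2) q • idxE k q) = idxE k p := by
    rw [Finset.sum_eq_single p]
    · rw [Pi.single_eq_same, one_smul]
    · intro q _ hq
      rw [Pi.single_eq_of_ne hq, zero_smul]
    · intro hp
      exact absurd (Finset.mem_univ p) hp
  unfold phi
  rw [h1, h2]

noncomputable def sigma' (k : ℕ) (s : ZMod 2 × (Fin k → ZMod 2)) : Fin (2 ^ k) → ZMod 2 :=
  if s.1 = 1 then Pi.single ((idxE k).symm s.2) 1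
  else Pi.single ((idxE k).symm s.2) 1 + Pi.single ((idxE k).symm 0) 1

lemma phi_sigma (k : ℕ) (s : ZMod 2 × (Fin k → ZMod 2)) : phi k (sigma' k s) = s := by
  obtain ⟨b, a⟩ := s
  by_cases hb : b = 1
  · rw [sigma', if_pos hb, phi_single, Equiv.apply_symm_apply, hb]
  · have hb0 : b = 0 := by
      have : ∀ c : ZMod 2, c ≠ 1 → c = 0 := by decide
      exact this b hb
    rw [sigma', if_neg hb, phi_add, phi_single, phi_single, Equiv.apply_symm_apply,
      Equiv.apply_symm_apply, Prod.mk_add_mk, hb0]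
    have h11 : (1 : ZMod 2) + 1 = 0 := by decide
    rw [h11, add_zero]

/-- minimum weight 4 for nonzero codewords -/
lemma ker_weight (k : ℕ) (x : Fin (2 ^ k) → ZMod 2) (hx : x ≠ 0) (h : phi k x = 0) :
    4 ≤ hammingNorm x := by
  classical
  have hone : ∀ c : ZMod 2, c ≠ 0 → c = 1 := by decide
  set S : Finset (Fin (2 ^ k)) := Finset.univ.filter (fun p => x p ≠ 0) with hSdef
  have hnorm : hammingNorm x = S.card := rfl
  have hsum1 : (∑ p, x p) = (S.card : ZMod 2) := by
    rw [← Finset.sum_filter_of_ne (fun p _ hp => hp : ∀ p ∈ Finset.univ, x p ≠ 0 → x p ≠ 0)]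
    rw [Finset.sum_congr rfl (fun p hp => hone (x p) (Finset.mem_filter.mp hp).2)]
    rw [Finset.sum_const, nsmul_eq_mul, mul_one]
  have h1 : (S.card : ZMod 2) = 0 := by
    rw [← hsum1]
    exact congrArg Prod.fst h
  have hdvd : 2 ∣ S.card := (ZMod.natCast_eq_zero_iff S.card 2).mp h1
  have hpos : S.card ≠ 0 := by
    intro hc
    apply hx
    funext p
    by_contra hp
    have : p ∈ S := Finset.mem_filter.mpr ⟨Finset.mem_univ p, hp⟩
    rw [Finset.card_eq_zero.mp hc] at this
    exact absurd this (Finset.notMem_empty p)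
  have hn2 : S.card ≠ 2 := by
    intro h2
    obtain ⟨p, q, hpq, hSpq⟩ := Finset.card_eq_two.mp h2
    have h2' : (∑ p, x p • idxE k p) = 0 := congrArg Prod.snd h
    have hrestrict : (∑ p ∈ S, x p • idxE k p) = ∑ p, x p • idxE k p := by
      apply Finset.sum_filter_of_ne
      intro p _ hp hp0
      rw [hp0, zero_smul] at hp
      exact hp rfl
    rw [← hrestrict, hSpq, Finset.sum_pair hpq] at h2'
    have hpS : p ∈ S := by rw [hSpq]; exact Finset.mem_insert_self p {q}
    have hqS : q ∈ S := by rw [hSpq]; exact Finset.mem_insert_of_mem (Finset.mem_singleton_self q)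
    have hxp : x p = 1 := hone (x p) (Finset.mem_filter.mp hpS).2
    have hxq : x q = 1 := hone (x q) (Finset.mem_filter.mp hqS).2
    rw [hxp, hxq, one_smul, one_smul] at h2'
    have heq : idxE k p = idxE k q := by
      funext i
    -- from (idxE k p + idxE k q) = 0
      have := congrFun h2' i
      have hz : ∀ a b : ZMod 2, a + b = 0 → a = b := by decide
      exact hz _ _ this
    exact hpq ((idxE k).injective heq)
  omega

/-- cardinality of the code -/
lemma kerF_card (k : ℕ) :
    (Finset.univ.filter (fun x : Fin (2 ^ k) → ZMod 2 => phi k x = 0)).card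
      = 2 ^ (2 ^ k - (k + 1)) := by
  classical
  set KF := Finset.univ.filter (fun x : Fin (2 ^ k) → ZMod 2 => phi k x = 0) with hKF
  have hbij : (KF ×ˢ (Finset.univ : Finset (ZMod 2 × (Fin k → ZMod 2)))).card
      = (Finset.univ : Finset (Fin (2 ^ k) → ZMod 2)).card := by
    apply Finset.card_bij' (fun p _ => p.1 + sigma' k p.2)
      (fun x _ => (x - sigma' k (phi k x), phi k x))
    · intro a _
      exact Finset.mem_univ _
    · intro x _
      refine Finset.mem_product.mpr ⟨?_, Finset.mem_univ _⟩
      refine Finset.mem_filter.mpr ⟨Finset.mem_univ _, ?_⟩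
      rw [phi_sub, phi_sigma, sub_self]
    · intro a ha
      obtain ⟨hc, -⟩ := Finset.mem_product.mp ha
      have hc0 : phi k a.1 = 0 := (Finset.mem_filter.mp hc).2
      have hphi : phi k (a.1 + sigma' k a.2) = a.2 := by
        rw [phi_add, hc0, phi_sigma, zero_add]
      rw [hphi]
      ext <;> simp
    · intro x _
      simp
  rw [Finset.card_product, Finset.card_univ, Finset.card_univ, Fintype.card_prod,
    Fintype.card_fun, Fintype.card_fun, ZMod.card, Fintype.card_fin, Fintype.card_fin] at hbij
  -- hbij : KF.card * (2 * 2 ^ k) = 2 ^ (2 ^ k)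
  have hk1 : k + 1 ≤ 2 ^ k := Nat.lt_two_pow_self
  have hpow : (2 : ℕ) * 2 ^ k = 2 ^ (k + 1) := by ring
  have hsplit : (2 : ℕ) ^ (2 ^ k) = 2 ^ (k + 1) * 2 ^ (2 ^ k - (k + 1)) := by
    rw [← pow_add]
    congr 1
    omega
  rw [hpow, hsplit] at hbij
  rw [mul_comm KF.card] at hbij
  exact Nat.eq_of_mul_eq_mul_left (pow_pos (by norm_num) (k + 1)) hbij

end Stmt18Aux
namespace Stmt18Aux

open Finset Function

def eB : Bool ≃ ZMod 2 where
  toFun b := if b then 1 else 0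
  invFun z := if z = 1 then true else false
  left_inv := by decide
  right_inv := by decide

noncomputable def codeF (k : ℕ) : Finset (Fin (2 ^ k) → Bool) :=
  (Finset.univ.filter (fun x : Fin (2 ^ k) → ZMod 2 => phi k x = 0)).image
    (fun w => fun i => eB.symm (w i))

lemma codeF_card (k : ℕ) : (codeF k).card = 2 ^ (2 ^ k - (k + 1)) := by
  have hinj : Function.Injective
      (fun (w : Fin (2 ^ k) → ZMod 2) => fun i => eB.symm (w i)) := by
    intro w w' h
    funext i
    exact eB.symm.injective (congrFun h i)
  rw [codeF, Finset.card_image_of_injective _ hinj, kerF_card]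

lemma codeF_dist {k : ℕ} {c₁ c₂ : Fin (2 ^ k) → Bool} (h₁ : c₁ ∈ codeF k)
    (h₂ : c₂ ∈ codeF k) (hne : c₁ ≠ c₂) : 4 ≤ hammingDist c₁ c₂ := by
  obtain ⟨w₁, hw₁, rfl⟩ := Finset.mem_image.mp h₁
  obtain ⟨w₂, hw₂, rfl⟩ := Finset.mem_image.mp h₂
  have hw₁0 : phi k w₁ = 0 := (Finset.mem_filter.mp hw₁).2
  have hw₂0 : phi k w₂ = 0 := (Finset.mem_filter.mp hw₂).2
  have hwne : w₁ ≠ w₂ := fun h => hne (by rw [h])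
  show 4 ≤ hammingDist (fun i => eB.symm (w₁ i)) (fun i => eB.symm (w₂ i))
  have hdist : hammingDist (fun i => eB.symm (w₁ i)) (fun i => eB.symm (w₂ i))
      = hammingDist w₁ w₂ :=
    hammingDist_comp (fun _ => eB.symm) (fun _ => eB.symm.injective)
  rw [hdist, hammingDist_eq_hammingNorm, neg_add_eq_sub]
  exact ker_weight k (w₂ - w₁) (sub_ne_zero_of_ne hwne.symm)
    (by rw [phi_sub, hw₂0, hw₁0, sub_self])

noncomputable def eopB (k : ℕ) : Finset (Sym2 (Fin (2 ^ k) → Bool)) :=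
  ((codeF k) ×ˢ (Finset.univ : Finset (Fin (2 ^ k)))).image
    (fun p => s(p.1, flip p.2 p.1))

lemma eopB_mem {k : ℕ} {e : Sym2 (Fin (2 ^ k) → Bool)} :
    e ∈ eopB k ↔ ∃ c ∈ codeF k, ∃ i, e = s(c, flip i c) := by
  constructor
  · intro he
    obtain ⟨p, hp, rfl⟩ := Finset.mem_image.mp he
    obtain ⟨hc, -⟩ := Finset.mem_product.mp hp
    exact ⟨p.1, hc, p.2, rfl⟩
  · rintro ⟨c, hc, i, rfl⟩
    exact Finset.mem_image.mpr ⟨(c, i), Finset.mem_product.mpr ⟨hc, Finset.mem_univ _⟩, rfl⟩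

lemma eopB_card (k : ℕ) : (eopB k).card = 2 ^ (2 ^ k - 1) := by
  have hk1 : k + 1 ≤ 2 ^ k := Nat.lt_two_pow_self
  have hinj : Set.InjOn (fun p : (Fin (2 ^ k) → Bool) × Fin (2 ^ k) => s(p.1, flip p.2 p.1))
      (((codeF k) ×ˢ (Finset.univ : Finset (Fin (2 ^ k))) :
        Finset ((Fin (2 ^ k) → Bool) × Fin (2 ^ k))) :
        Set ((Fin (2 ^ k) → Bool) × Fin (2 ^ k))) := by
    rintro ⟨c, i⟩ hp ⟨c', j⟩ hq hpq
    simp only [Finset.mem_coe, Finset.mem_product] at hp hq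
    have hc := hp.1
    have hc' := hq.1
    simp only at hpq
    rcases Sym2.eq_iff.mp hpq with ⟨h1, h2⟩ | ⟨h1, h2⟩
    · subst h1
      have hij : i = j := by
        by_contra hij
        have hcf := congrFun h2 i
        rw [flip_apply_self, flip_apply_ne hij] at hcf
        exact Bool.not_ne_self (c i) hcf
      rw [hij]
    · exfalso
      have hcc : c ≠ c' := by
        intro hEq
        subst hEq
        exact flip_ne j c h1.symm
      have h4 := codeF_dist hc hc' hcc
      have h1d : hammingDist c c' = 1 := by rw [← h2]; exact dist_flip i c
      omega
  rw [eopB, Finset.card_image_of_injOn hinj, Finset.card_product, codeF_card,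
    Finset.card_univ, Fintype.card_fin, ← pow_add]
  congr 1
  omega

lemma eopB_isEOP (k : ℕ) : IsEOPSet (hypercube (2 ^ k)) ↑(eopB k) := by
  constructor
  · intro e he
    rw [Finset.mem_coe] at he
    obtain ⟨c, hc, i, rfl⟩ := eopB_mem.mp he
    rw [SimpleGraph.mem_edgeSet, hyp_adj]
    exact dist_flip i c
  · intro e₁ h₁ e₂ h₂ hne x hx y hy hadj
    rw [Finset.mem_coe] at h₁ h₂
    obtain ⟨c₁, hc₁, i, rfl⟩ := eopB_mem.mp h₁
    obtain ⟨c₂, hc₂, j, rfl⟩ := eopB_mem.mp h₂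
    have hd : hammingDist x y = 1 := hyp_adj.mp hadj
    rw [Sym2.mem_iff] at hx hy
    by_cases hcc : c₁ = c₂
    · subst hcc
      rcases hx with rfl | rfl <;> rcases hy with rfl | rfl
      · exact absurd hadj (hypercube (2 ^ k)).irrefl
      · right; rfl
      · left; exact Sym2.eq_swap
      · by_cases hij : i = j
        · subst hij
          exact absurd hadj (hypercube (2 ^ k)).irrefl
        · exfalso
          have hlt := dist_flip_flip hij c₁
          omega
    · exfalso
      have h4 := codeF_dist hc₁ hc₂ hcc
      have d1 : hammingDist c₁ x ≤ 1 := by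
        rcases hx with rfl | rfl
        · rw [hammingDist_self]
          omega
        · exact le_of_eq (dist_flip i c₁)
      have d2 : hammingDist y c₂ ≤ 1 := by
        rcases hy with rfl | rfl
        · rw [hammingDist_self]
          omega
        · rw [hammingDist_comm]
          exact le_of_eq (dist_flip j c₂)
      have t1 := hammingDist_triangle c₁ x c₂
      have t2 := hammingDist_triangle x y c₂
      omega

end Stmt18Aux

/-- If `n = 2^k` for some `k ≥ 1`, then `ρₑᵒ(Q_n) = 2^(n−1)`. -/
theorem stmt_18 (k : ℕ) (hk : 1 ≤ k) :
    eopNum (hypercube (2 ^ k)) = 2 ^ (2 ^ k - 1) := by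
  classical
  have hn1 : 1 ≤ 2 ^ k := Nat.one_le_two_pow
  have hub : ∀ m ∈ {m | ∃ B : Finset (Sym2 (Fin (2 ^ k) → Bool)),
      IsEOPSet (hypercube (2 ^ k)) ↑B ∧ B.card = m}, m ≤ 2 ^ (2 ^ k - 1) := by
    rintro m ⟨B, hB, rfl⟩
    obtain ⟨S, hSind, hScard⟩ := Stmt18Aux.eop_card_le_indep _ B hB
    rw [← hScard]
    exact Stmt18Aux.indep_bound hn1 S hSind
  have hmem : 2 ^ (2 ^ k - 1) ∈ {m | ∃ B : Finset (Sym2 (Fin (2 ^ k) → Bool)),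
      IsEOPSet (hypercube (2 ^ k)) ↑B ∧ B.card = m} :=
    ⟨Stmt18Aux.eopB k, Stmt18Aux.eopB_isEOP k, Stmt18Aux.eopB_card k⟩
  rw [eopNum]
  exact le_antisymm (csSup_le ⟨_, hmem⟩ hub) (le_csSup ⟨_, hub⟩ hmem)
end
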